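/- arXiv:2006.14183 — 5 statements merged into one kernel-verified Lean document; each statement's English description precedes it below -/
import Mathlib

section
/- Let (G,Λ) be a pseudo free self-similar k-graph such that g·v = v for all g ∈ G and v ∈ Λ^0, and let T be a maximal tail of Λ. If every cycline triple of (G, ΛT) is a cycline pair of (G, ΛT), then Per_{G, H_T ΛT} = Per_{H_T ΛT} = Per_{G, ΛT} = Per_{ΛT}, and this common set is a subgroup of ℤ^k. -/
/-- A `k`-graph: a countable small category equipped with a degree functor
`d : Λ → ℕ^k` satisfying the unique factorization property.  Objects are
identified with their identity morphisms (the degree-zero paths);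
`comp μ ν` is the composite `μν` (a junk value when `s μ ≠ r ν`). -/
structure KGraph (k : ℕ) where
  Path : Type
  countable : Countable Path
  r : Path → Path
  s : Path → Path
  d : Path → Fin k → ℕ
  comp : Path → Path → Path
  d_r : ∀ μ, d (r μ) = 0
  d_s : ∀ μ, d (s μ) = 0
  r_r : ∀ μ, r (r μ) = r μ
  s_r : ∀ μ, s (r μ) = r μ
  r_s : ∀ μ, r (s μ) = s μ
  s_s : ∀ μ, s (s μ) = s μ
  eq_r_of_d_eq_zero : ∀ μ, d μ = 0 → μ = r μ
  comp_id : ∀ μ, comp μ (s μ) = μ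
  id_comp : ∀ μ, comp (r μ) μ = μ
  r_comp : ∀ μ ν, s μ = r ν → r (comp μ ν) = r μ
  s_comp : ∀ μ ν, s μ = r ν → s (comp μ ν) = s ν
  d_comp : ∀ μ ν, s μ = r ν → d (comp μ ν) = d μ + d ν
  comp_assoc : ∀ μ ν ξ, s μ = r ν → s ν = r ξ →
    comp (comp μ ν) ξ = comp μ (comp ν ξ)
  factor : ∀ μ p q, d μ = p + q →
    ∃! αβ : Path × Path, s αβ.1 = r αβ.2 ∧ d αβ.1 = p ∧ d αβ.2 = q ∧
      comp αβ.1 αβ.2 = μ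

namespace KGraph

variable {k : ℕ} (Λ : KGraph k)

/-- The vertices of a `k`-graph are the degree-zero paths. -/
def IsVertex (v : Λ.Path) : Prop := Λ.d v = 0

/-- `Λ` is row-finite if `|v Λ^p| < ∞` for every vertex `v` and `p ∈ ℕ^k`. -/
def RowFinite : Prop :=
  ∀ v, Λ.IsVertex v → ∀ p : Fin k → ℕ, {μ | Λ.r μ = v ∧ Λ.d μ = p}.Finite

/-- `Λ` is source-free if `v Λ^p ≠ ∅` for every vertex `v` and `p ∈ ℕ^k`. -/
def SourceFree : Prop :=
  ∀ v, Λ.IsVertex v → ∀ p : Fin k → ℕ, ∃ μ, Λ.r μ = v ∧ Λ.d μ = p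

/-- `ΛT`, the set of paths of `Λ` whose source lies in `T`. -/
def tailPaths (T : Set Λ.Path) : Set Λ.Path := {μ | Λ.s μ ∈ T}

/-- `H Λ T`, the set of paths with source in `T` and range in `H`. -/
def cornerPaths (T H : Set Λ.Path) : Set Λ.Path := {μ | Λ.s μ ∈ T ∧ Λ.r μ ∈ H}

end KGraph

/-- A maximal tail of a `k`-graph. -/
structure MaximalTail {k : ℕ} (Λ : KGraph k) (T : Set Λ.Path) : Prop where
  nonempty : T.Nonempty
  vertex : ∀ v ∈ T, Λ.IsVertex v
  backward_closed : ∀ w, Λ.IsVertex w → ∀ v ∈ T, (∃ μ, Λ.r μ = w ∧ Λ.s μ = v) → w ∈ T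
  reaches : ∀ v ∈ T, ∀ p : Fin k → ℕ, ∃ μ, Λ.r μ = v ∧ Λ.d μ = p ∧ Λ.s μ ∈ T
  directed : ∀ v₁ ∈ T, ∀ v₂ ∈ T, ∃ w ∈ T,
    (∃ μ, Λ.r μ = v₁ ∧ Λ.s μ = w) ∧ (∃ ν, Λ.r ν = v₂ ∧ Λ.s ν = w)

/-- An infinite path of a `k`-graph, i.e. a degree-preserving functor
`x : Ω_k → Λ`; here `val p n` records the segment `x(p, p + n)`. -/
structure InfPath {k : ℕ} (Λ : KGraph k) where
  val : (Fin k → ℕ) → (Fin k → ℕ) → Λ.Path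
  d_val : ∀ p n, Λ.d (val p n) = n
  r_val : ∀ p n, Λ.r (val p n) = val p 0
  s_val : ∀ p n, Λ.s (val p n) = val (p + n) 0
  comp_val : ∀ p m n, Λ.comp (val p m) (val (p + m) n) = val p (m + n)

namespace InfPath

variable {k : ℕ} {Λ : KGraph k}

/-- The shift `σ^n x` of an infinite path. -/
def shift (x : InfPath Λ) (n : Fin k → ℕ) : InfPath Λ where
  val p m := x.val (p + n) m
  d_val p m := x.d_val _ _
  r_val p m := x.r_val _ _
  s_val p m := by rw [x.s_val, add_right_comm]
  comp_val p m m' := by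
    show Λ.comp (x.val (p + n) m) (x.val (p + m + n) m') = x.val (p + n) (m + m')
    rw [add_right_comm p m n]; exact x.comp_val (p + n) m m'

/-- An infinite path lies in the subgraph determined by the set of paths `P`
if all of its segments lie in `P`. -/
def inSub (P : Set Λ.Path) (x : InfPath Λ) : Prop := ∀ p n, x.val p n ∈ P

end InfPath

/-- `z = μ x`: `z` is the infinite path obtained by prepending the finite
path `μ` to the infinite path `x` (which requires `s μ = x(0,0)`). -/
def KGraph.IsExtension {k : ℕ} (Λ : KGraph k) (μ : Λ.Path) (x z : InfPath Λ) : Prop :=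
  Λ.s μ = x.val 0 0 ∧ ∀ n, z.val 0 (Λ.d μ + n) = Λ.comp μ (x.val 0 n)

/-- A cycline pair `(μ, 1, ν)` of the subgraph of `Λ` determined by the set of
paths `P`: `s μ = s ν` and `μ x = ν x` for every infinite path `x` of the
subgraph with range `s ν`. -/
def KGraph.IsCyclinePair {k : ℕ} (Λ : KGraph k) (P : Set Λ.Path) (μ ν : Λ.Path) : Prop :=
  μ ∈ P ∧ ν ∈ P ∧ Λ.s μ = Λ.s ν ∧
    ∀ x : InfPath Λ, x.inSub P →
      ∀ z : InfPath Λ, Λ.IsExtension ν x z → Λ.IsExtension μ x z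

/-- `Per_Γ` for the subgraph `Γ` of `Λ` determined by `P`:
the set of all `d μ − d ν` over cycline pairs `(μ, 1, ν)`. -/
def KGraph.PerPair {k : ℕ} (Λ : KGraph k) (P : Set Λ.Path) : Set (Fin k → ℤ) :=
  {m | ∃ μ ν, Λ.IsCyclinePair P μ ν ∧ m = fun i => (Λ.d μ i : ℤ) - (Λ.d ν i : ℤ)}

/-- A self-similar `k`-graph `(G, Λ)`: an action of the countable discrete
group `G` on `Λ` together with a restriction map `(g, μ) ↦ g|_μ`. -/
structure SelfSimilarSys (k : ℕ) (G : Type) [Group G] [Countable G] (Λ : KGraph k) where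
  act : G → Λ.Path → Λ.Path
  res : G → Λ.Path → G
  act_one : ∀ μ, act 1 μ = μ
  act_mul : ∀ g h μ, act (g * h) μ = act g (act h μ)
  d_act : ∀ g μ, Λ.d (act g μ) = Λ.d μ
  s_act : ∀ g μ, Λ.s (act g μ) = act g (Λ.s μ)
  r_act : ∀ g μ, Λ.r (act g μ) = act g (Λ.r μ)
  act_comp : ∀ g μ ν, Λ.s μ = Λ.r ν →
    act g (Λ.comp μ ν) = Λ.comp (act g μ) (act (res g μ) ν)
  res_vertex : ∀ g v, Λ.IsVertex v → res g v = g
  res_comp : ∀ g μ ν, Λ.s μ = Λ.r ν → res g (Λ.comp μ ν) = res (res g μ) ν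
  res_one : ∀ μ, res 1 μ = 1
  res_mul : ∀ g h μ, res (g * h) μ = res g (act h μ) * res h μ

namespace SelfSimilarSys

variable {k : ℕ} {G : Type} [Group G] [Countable G] {Λ : KGraph k}

/-- `(G, Λ)` is pseudo free: `g·μ = μ` and `g|_μ = 1` imply `g = 1`. -/
def PseudoFree (S : SelfSimilarSys k G Λ) : Prop :=
  ∀ g μ, S.act g μ = μ → S.res g μ = 1 → g = 1

/-- `y = g · x` for infinite paths: `y(0, n) = g · x(0, n)` for all `n`. -/
def IsGAct (S : SelfSimilarSys k G Λ) (g : G) (x y : InfPath Λ) : Prop :=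
  ∀ n, y.val 0 n = S.act g (x.val 0 n)

/-- A cycline triple `(μ, g, ν)` of the subgraph of `Λ` determined by `P`:
`s μ = g · s ν` and `μ (g · x) = ν x` for every infinite path `x` of the
subgraph with range `s ν`. -/
def IsCyclineTriple (S : SelfSimilarSys k G Λ) (P : Set Λ.Path)
    (μ : Λ.Path) (g : G) (ν : Λ.Path) : Prop :=
  μ ∈ P ∧ ν ∈ P ∧ Λ.s μ = S.act g (Λ.s ν) ∧
    ∀ x : InfPath Λ, x.inSub P → Λ.s ν = x.val 0 0 →
      ∀ y : InfPath Λ, S.IsGAct g x y →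
        ∀ z : InfPath Λ, Λ.IsExtension ν x z → Λ.IsExtension μ y z

/-- `Per_{G,Γ}` for the subgraph `Γ` of `Λ` determined by `P`:
the set of all `d μ − d ν` over cycline triples `(μ, g, ν)`. -/
def PerTriple (S : SelfSimilarSys k G Λ) (P : Set Λ.Path) : Set (Fin k → ℤ) :=
  {m | ∃ μ g ν, S.IsCyclineTriple P μ g ν ∧ m = fun i => (Λ.d μ i : ℤ) - (Λ.d ν i : ℤ)}

/-- Membership `y ∈ [x]`: `y` is an infinite path of `ΛT` and
`σ^p x = g · σ^q y` for some `p, q ∈ ℕ^k` and `g ∈ G`. -/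
def ClassMem (S : SelfSimilarSys k G Λ) (T : Set Λ.Path) (x y : InfPath Λ) : Prop :=
  y.inSub (Λ.tailPaths T) ∧ ∃ p q : Fin k → ℕ, ∃ g : G, S.IsGAct g (y.shift q) (x.shift p)

end SelfSimilarSys

/-- `H_T`: the vertices `v ∈ T` such that for all `p, q ∈ ℕ^k` with
`p − q ∈ Per_{ΛT}` and every `μ ∈ v Λ^p T` there is a unique `ν ∈ v Λ^q T`
with `(μ, 1, ν)` a cycline pair of `ΛT`. -/
def KGraph.HSet {k : ℕ} (Λ : KGraph k) (T : Set Λ.Path) : Set Λ.Path :=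
  {v | v ∈ T ∧ ∀ p q : Fin k → ℕ,
    (fun i => (p i : ℤ) - (q i : ℤ)) ∈ Λ.PerPair (Λ.tailPaths T) →
      ∀ μ, Λ.r μ = v → Λ.d μ = p → Λ.s μ ∈ T →
        ∃! ν, Λ.r ν = v ∧ Λ.d ν = q ∧ Λ.IsCyclinePair (Λ.tailPaths T) μ ν}
namespace SSK

open KGraph

variable {k : ℕ} {Λ : KGraph k}

/-! ### basic path lemmas -/

lemma vertex_r {v : Λ.Path} (h : Λ.d v = 0) : Λ.r v = v := (Λ.eq_r_of_d_eq_zero v h).symm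

lemma vertex_s {v : Λ.Path} (h : Λ.d v = 0) : Λ.s v = v := by
  have hv := Λ.eq_r_of_d_eq_zero v h
  rw [hv, Λ.s_r, ← hv]

lemma comp_left_cancel {C X Y : Λ.Path} (hX : Λ.s C = Λ.r X) (hY : Λ.s C = Λ.r Y)
    (hd : Λ.d X = Λ.d Y) (h : Λ.comp C X = Λ.comp C Y) : X = Y := by
  have hdW : Λ.d (Λ.comp C X) = Λ.d C + Λ.d X := Λ.d_comp _ _ hX
  have h1 : Λ.s (C, X).1 = Λ.r (C, X).2 ∧ Λ.d (C, X).1 = Λ.d C ∧ Λ.d (C, X).2 = Λ.d X ∧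
      Λ.comp (C, X).1 (C, X).2 = Λ.comp C X := ⟨hX, rfl, rfl, rfl⟩
  have h2 : Λ.s (C, Y).1 = Λ.r (C, Y).2 ∧ Λ.d (C, Y).1 = Λ.d C ∧ Λ.d (C, Y).2 = Λ.d X ∧
      Λ.comp (C, Y).1 (C, Y).2 = Λ.comp C X := ⟨hY, rfl, hd.symm, h.symm⟩
  have := (Λ.factor (Λ.comp C X) (Λ.d C) (Λ.d X) hdW).unique h1 h2
  exact congrArg Prod.snd this

lemma comp_first_factor_eq {C X Y Z : Λ.Path} (hX : Λ.s C = Λ.r X) (hY : Λ.s Y = Λ.r Z)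
    (hd : Λ.d C = Λ.d Y) (h : Λ.comp C X = Λ.comp Y Z) : C = Y := by
  have hdX : Λ.d X = Λ.d Z := by
    have d1 : Λ.d (Λ.comp C X) = Λ.d C + Λ.d X := Λ.d_comp _ _ hX
    have d2 : Λ.d (Λ.comp Y Z) = Λ.d Y + Λ.d Z := Λ.d_comp _ _ hY
    rw [h, d2, ← hd] at d1
    exact (add_left_cancel d1.symm)
  have hdW : Λ.d (Λ.comp C X) = Λ.d C + Λ.d X := Λ.d_comp _ _ hX
  have h1 : Λ.s (C, X).1 = Λ.r (C, X).2 ∧ Λ.d (C, X).1 = Λ.d C ∧ Λ.d (C, X).2 = Λ.d X ∧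
      Λ.comp (C, X).1 (C, X).2 = Λ.comp C X := ⟨hX, rfl, rfl, rfl⟩
  have h2 : Λ.s (Y, Z).1 = Λ.r (Y, Z).2 ∧ Λ.d (Y, Z).1 = Λ.d C ∧ Λ.d (Y, Z).2 = Λ.d X ∧
      Λ.comp (Y, Z).1 (Y, Z).2 = Λ.comp C X := ⟨hY, hd.symm, hdX.symm, h.symm⟩
  have := (Λ.factor (Λ.comp C X) (Λ.d C) (Λ.d X) hdW).unique h1 h2
  exact congrArg Prod.fst this

/-! ### middle segments -/

/-- `M` is the segment of `W` from position `p` to `p + n`. -/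
def IsMid (Λ : KGraph k) (W : Λ.Path) (p n : Fin k → ℕ) (M : Λ.Path) : Prop :=
  ∃ A B, Λ.s A = Λ.r M ∧ Λ.s M = Λ.r B ∧ Λ.d A = p ∧ Λ.d M = n ∧
    Λ.comp A (Λ.comp M B) = W

lemma IsMid.d {W p n M} (h : IsMid Λ W p n M) : Λ.d M = n := by
  obtain ⟨A, B, _, _, _, h5, _⟩ := h; exact h5

lemma IsMid.unique {W p n M M'} (h : IsMid Λ W p n M) (h' : IsMid Λ W p n M') : M = M' := by
  obtain ⟨A, B, hAM, hMB, hdA, hdM, hc⟩ := h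
  obtain ⟨A', B', hAM', hMB', hdA', hdM', hc'⟩ := h'
  have hrMB : Λ.r (Λ.comp M B) = Λ.r M := Λ.r_comp _ _ hMB
  have hrMB' : Λ.r (Λ.comp M' B') = Λ.r M' := Λ.r_comp _ _ hMB'
  have hsA : Λ.s A = Λ.r (Λ.comp M B) := by rw [hrMB]; exact hAM
  have hsA' : Λ.s A' = Λ.r (Λ.comp M' B') := by rw [hrMB']; exact hAM'
  have hdMB : Λ.d (Λ.comp M B) = n + Λ.d B := by rw [Λ.d_comp _ _ hMB, hdM]
  have hdMB' : Λ.d (Λ.comp M' B') = n + Λ.d B' := by rw [Λ.d_comp _ _ hMB', hdM']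
  have hdW : Λ.d W = p + (n + Λ.d B) := by
    rw [← hc, Λ.d_comp _ _ hsA, hdA, hdMB]
  have hdW' : Λ.d W = p + (n + Λ.d B') := by
    rw [← hc', Λ.d_comp _ _ hsA', hdA', hdMB']
  have hBB : Λ.d B = Λ.d B' := by
    have := hdW.symm.trans hdW'
    exact add_left_cancel (add_left_cancel this)
  have h1 : Λ.s (A, Λ.comp M B).1 = Λ.r (A, Λ.comp M B).2 ∧ Λ.d (A, Λ.comp M B).1 = p ∧
      Λ.d (A, Λ.comp M B).2 = n + Λ.d B ∧ Λ.comp (A, Λ.comp M B).1 (A, Λ.comp M B).2 = W :=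
    ⟨hsA, hdA, hdMB, hc⟩
  have h2 : Λ.s (A', Λ.comp M' B').1 = Λ.r (A', Λ.comp M' B').2 ∧ Λ.d (A', Λ.comp M' B').1 = p ∧
      Λ.d (A', Λ.comp M' B').2 = n + Λ.d B ∧
      Λ.comp (A', Λ.comp M' B').1 (A', Λ.comp M' B').2 = W :=
    ⟨hsA', hdA', by rw [hdMB', hBB], hc'⟩
  have hpair := (Λ.factor W p (n + Λ.d B) hdW).unique h1 h2
  have hMBeq : Λ.comp M B = Λ.comp M' B' := congrArg Prod.snd hpair
  have h3 : Λ.s (M, B).1 = Λ.r (M, B).2 ∧ Λ.d (M, B).1 = n ∧ Λ.d (M, B).2 = Λ.d B ∧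
      Λ.comp (M, B).1 (M, B).2 = Λ.comp M B := ⟨hMB, hdM, rfl, rfl⟩
  have h4 : Λ.s (M', B').1 = Λ.r (M', B').2 ∧ Λ.d (M', B').1 = n ∧ Λ.d (M', B').2 = Λ.d B ∧
      Λ.comp (M', B').1 (M', B').2 = Λ.comp M B := ⟨hMB', hdM', hBB.symm, hMBeq.symm⟩
  have := (Λ.factor (Λ.comp M B) n (Λ.d B) hdMB).unique h3 h4
  exact congrArg Prod.fst this

lemma isMid_exists {W : Λ.Path} {p n q : Fin k → ℕ} (h : Λ.d W = p + (n + q)) :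
    ∃ M, IsMid Λ W p n M := by
  obtain ⟨⟨A, Y⟩, ⟨hs, hdA, hdY, hc⟩, -⟩ := Λ.factor W p (n + q) h
  obtain ⟨⟨M, B⟩, ⟨hs2, hdM, hdB, hc2⟩, -⟩ := Λ.factor Y n q hdY
  refine ⟨M, A, B, ?_, hs2, hdA, hdM, ?_⟩
  · rw [← hc2] at hs; rwa [Λ.r_comp _ _ hs2] at hs
  · rw [hc2]; exact hc

lemma IsMid.r_isMid {W p n M} (h : IsMid Λ W p n M) : IsMid Λ W p 0 (Λ.r M) := by
  obtain ⟨A, B, hAM, hMB, hdA, hdM, hc⟩ := h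
  refine ⟨A, Λ.comp M B, by rw [Λ.r_r]; exact hAM, by rw [Λ.s_r, Λ.r_comp _ _ hMB],
    hdA, Λ.d_r M, ?_⟩
  have : Λ.comp (Λ.r M) (Λ.comp M B) = Λ.comp M B := by
    have := Λ.id_comp (Λ.comp M B)
    rwa [Λ.r_comp _ _ hMB] at this
  rw [this]; exact hc

lemma IsMid.s_isMid {W p n M} (h : IsMid Λ W p n M) : IsMid Λ W (p + n) 0 (Λ.s M) := by
  obtain ⟨A, B, hAM, hMB, hdA, hdM, hc⟩ := h
  have hsB : Λ.comp (Λ.s M) B = B := by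
    have := Λ.id_comp B; rwa [← hMB] at this
  refine ⟨Λ.comp A M, B, by rw [Λ.s_comp _ _ hAM, Λ.r_s], by rw [Λ.s_s]; exact hMB,
    by rw [Λ.d_comp _ _ hAM, hdA, hdM], Λ.d_s M, ?_⟩
  rw [hsB, Λ.comp_assoc _ _ _ hAM hMB]; exact hc

lemma IsMid.extend {W V p n M} (h : IsMid Λ W p n M) (hsW : Λ.s W = Λ.r V) :
    IsMid Λ (Λ.comp W V) p n M := by
  obtain ⟨A, B, hAM, hMB, hdA, hdM, hc⟩ := h
  have hAMB : Λ.s A = Λ.r (Λ.comp M B) := by rw [Λ.r_comp _ _ hMB]; exact hAM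
  have hsW' : Λ.s B = Λ.r V := by
    rw [← hc, Λ.s_comp _ _ hAMB, Λ.s_comp _ _ hMB] at hsW; exact hsW
  have hsMBV : Λ.s (Λ.comp M B) = Λ.r V := by rw [Λ.s_comp _ _ hMB]; exact hsW'
  refine ⟨A, Λ.comp B V, hAM, by rw [Λ.r_comp _ _ hsW']; exact hMB, hdA, hdM, ?_⟩
  rw [← hc, Λ.comp_assoc _ _ _ hAMB hsMBV, Λ.comp_assoc _ _ _ hMB hsW']

lemma isMid_comp {W p a b M₁ M₂} (h1 : IsMid Λ W p a M₁) (h2 : IsMid Λ W (p + a) b M₂) :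
    IsMid Λ W p (a + b) (Λ.comp M₁ M₂) := by
  obtain ⟨A, B, hAM, hMB, hdA, hdM, hc⟩ := h2
  -- W = A · (M₂ · B) with d A = p + a
  obtain ⟨⟨X, Y⟩, ⟨hsXY, hdX, hdY, hcXY⟩, -⟩ := Λ.factor A p a (by rw [hdA])
  -- A = X · Y
  have hYM : Λ.s Y = Λ.r M₂ := by
    rw [← hcXY, Λ.s_comp _ _ hsXY] at hAM; exact hAM
  have hsXY' : Λ.s X = Λ.r Y := hsXY
  have hYMB : Λ.s Y = Λ.r (Λ.comp M₂ B) := by rw [Λ.r_comp _ _ hMB]; exact hYM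
  have hMid1 : IsMid Λ W p a Y := by
    refine ⟨X, Λ.comp M₂ B, hsXY', hYMB, hdX, hdY, ?_⟩
    rw [← Λ.comp_assoc _ _ _ hsXY' hYMB, hcXY]; exact hc
  have hY : Y = M₁ := hMid1.unique h1
  subst hY
  refine ⟨X, B, ?_, ?_, hdX, ?_, ?_⟩
  · rw [Λ.r_comp _ _ hYM]; exact hsXY'
  · rw [Λ.s_comp _ _ hYM]; exact hMB
  · rw [Λ.d_comp _ _ hYM, hdY, hdM]
  · rw [Λ.comp_assoc _ _ _ hYM hMB, ← Λ.comp_assoc _ _ _ hsXY' hYMB, hcXY]; exact hc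

lemma isMid_r (W : Λ.Path) : IsMid Λ W 0 0 (Λ.r W) := by
  refine ⟨Λ.r W, W, by rw [Λ.s_r, Λ.r_r], by rw [Λ.s_r], Λ.d_r W, Λ.d_r W, ?_⟩
  rw [Λ.id_comp, Λ.id_comp]

lemma isMid_zero_of_eq_comp {W M B : Λ.Path} {n} (hMB : Λ.s M = Λ.r B) (hdM : Λ.d M = n)
    (hW : W = Λ.comp M B) : IsMid Λ W 0 n M := by
  subst hW
  refine ⟨Λ.r (Λ.comp M B), B, ?_, hMB, Λ.d_r _, hdM, Λ.id_comp _⟩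
  rw [Λ.s_r, Λ.r_comp _ _ hMB]

end SSK
namespace SSK

open KGraph

variable {k : ℕ} {Λ : KGraph k}

lemma infPath_ext {x y : InfPath Λ} (h : ∀ p n, x.val p n = y.val p n) : x = y := by
  cases x with | mk xv xd xr xs xc =>
  cases y with | mk yv yd yr ys yc =>
  have hxy : xv = yv := by funext p n; exact h p n
  subst hxy; rfl

/-- the `(p, p+n)` segment of an infinite path is a middle segment of a long
initial segment. -/
lemma isMid_val (x : InfPath Λ) (p n q : Fin k → ℕ) :
    IsMid Λ (x.val 0 (p + (n + q))) p n (x.val p n) := by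
  have h0p : (0 : Fin k → ℕ) + p = p := zero_add p
  refine ⟨x.val 0 p, x.val (p + n) q, ?_, ?_, x.d_val 0 p, x.d_val p n, ?_⟩
  · rw [x.s_val 0 p, x.r_val p n, h0p]
  · rw [x.s_val p n, x.r_val (p + n) q]
  · rw [x.comp_val p n q]
    have := x.comp_val 0 p (n + q)
    rwa [h0p] at this

/-- a coherent increasing chain of paths, determining an infinite path. -/
structure PreInf (Λ : KGraph k) where
  W : ℕ → Λ.Path
  grow : ∀ j, ∃ E, Λ.s (W j) = Λ.r E ∧ W (j + 1) = Λ.comp (W j) E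
  big : ∀ j c, j ≤ Λ.d (W j) c

namespace PreInf

variable (D : PreInf Λ)

lemma isMid_stable {p n M j} (h : IsMid Λ (D.W j) p n M) :
    ∀ j', j ≤ j' → IsMid Λ (D.W j') p n M := by
  intro j' hj
  induction j', hj using Nat.le_induction with
  | base => exact h
  | succ j' hj ih =>
    obtain ⟨E, hE1, hE2⟩ := D.grow j'
    rw [hE2]; exact ih.extend hE1

def bigN (p n : Fin k → ℕ) : ℕ := ∑ c, (p c + n c)

lemma le_bigN (p n : Fin k → ℕ) (c : Fin k) : p c + n c ≤ bigN p n := by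
  unfold bigN
  exact Finset.single_le_sum (f := fun c => p c + n c) (fun i _ => Nat.zero_le _)
    (Finset.mem_univ c)

lemma exists_isMid (p n : Fin k → ℕ) : ∃ M, IsMid Λ (D.W (bigN p n)) p n M := by
  refine isMid_exists (q := fun c => Λ.d (D.W (bigN p n)) c - (p c + n c)) ?_
  funext c
  have h1 := le_bigN p n c
  have h2 := D.big (bigN p n) c
  simp only [Pi.add_apply]
  omega

noncomputable def val (p n : Fin k → ℕ) : Λ.Path := (D.exists_isMid p n).choose

lemma isMid_val' (p n : Fin k → ℕ) : IsMid Λ (D.W (bigN p n)) p n (D.val p n) :=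
  (D.exists_isMid p n).choose_spec

lemma val_eq {j : ℕ} {p n : Fin k → ℕ} {M : Λ.Path} (h : IsMid Λ (D.W j) p n M) :
    D.val p n = M := by
  have h1 := D.isMid_stable (D.isMid_val' p n) (max j (bigN p n)) (le_max_right _ _)
  have h2 := D.isMid_stable h (max j (bigN p n)) (le_max_left _ _)
  exact h1.unique h2

noncomputable def toInf : InfPath Λ where
  val := D.val
  d_val p n := (D.isMid_val' p n).d
  r_val p n := (D.val_eq ((D.isMid_val' p n).r_isMid)).symm
  s_val p n := (D.val_eq ((D.isMid_val' p n).s_isMid)).symm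
  comp_val p m n := by
    set J := max (bigN p m) (max (bigN (p + m) n) (bigN p (m + n))) with hJ
    have h1 : IsMid Λ (D.W J) p m (D.val p m) :=
      D.isMid_stable (D.isMid_val' p m) J (le_max_left _ _)
    have h2 : IsMid Λ (D.W J) (p + m) n (D.val (p + m) n) :=
      D.isMid_stable (D.isMid_val' (p + m) n) J (le_trans (le_max_left _ _) (le_max_right _ _))
    exact (D.val_eq (isMid_comp h1 h2)).symm

lemma toInf_val_eq {j : ℕ} {p n : Fin k → ℕ} {M : Λ.Path} (h : IsMid Λ (D.W j) p n M) :
    D.toInf.val p n = M := D.val_eq h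

end PreInf

lemma IsMid.s_mem {T : Set Λ.Path} (hT : MaximalTail Λ T) {W p n M} (h : IsMid Λ W p n M)
    (hW : Λ.s W ∈ T) : Λ.s M ∈ T := by
  obtain ⟨A, B, hAM, hMB, hdA, hdM, hc⟩ := h
  have hAMB : Λ.s A = Λ.r (Λ.comp M B) := by rw [Λ.r_comp _ _ hMB]; exact hAM
  have hsW : Λ.s W = Λ.s B := by rw [← hc, Λ.s_comp _ _ hAMB, Λ.s_comp _ _ hMB]
  rw [hsW] at hW
  exact hT.backward_closed (Λ.s M) (Λ.d_s M) (Λ.s B) hW ⟨B, hMB.symm, rfl⟩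

lemma PreInf.toInf_inSub (D : PreInf Λ) {T : Set Λ.Path} (hT : MaximalTail Λ T)
    (h : ∀ j, Λ.s (D.W j) ∈ T) : D.toInf.inSub (Λ.tailPaths T) :=
  fun p n => (D.isMid_val' p n).s_mem hT (h _)

/-! ### prepending a finite path to an infinite path -/

def cnst (k j : ℕ) : Fin k → ℕ := fun _ => j

noncomputable def extPre (μ : Λ.Path) (x : InfPath Λ) (h : Λ.s μ = x.val 0 0) : PreInf Λ where
  W j := Λ.comp μ (x.val 0 (cnst k j))
  grow j := by
    have hr : Λ.s μ = Λ.r (x.val 0 (cnst k j)) := by rw [x.r_val]; exact h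
    refine ⟨x.val (0 + cnst k j) (cnst k 1), ?_, ?_⟩
    · rw [Λ.s_comp _ _ hr, x.s_val, x.r_val]
    · have hc : cnst k (j + 1) = cnst k j + cnst k 1 := rfl
      have hsr : Λ.s (x.val 0 (cnst k j)) = Λ.r (x.val (0 + cnst k j) (cnst k 1)) := by
        rw [x.s_val, x.r_val]
      show Λ.comp μ (x.val 0 (cnst k (j + 1))) = _
      rw [hc, ← x.comp_val 0 (cnst k j) (cnst k 1), ← Λ.comp_assoc _ _ _ hr hsr]
  big j c := by
    have hr : Λ.s μ = Λ.r (x.val 0 (cnst k j)) := by rw [x.r_val]; exact h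
    rw [Λ.d_comp _ _ hr, x.d_val]
    simp [cnst]

noncomputable def extPath (μ : Λ.Path) (x : InfPath Λ) (h : Λ.s μ = x.val 0 0) : InfPath Λ :=
  (extPre μ x h).toInf

lemma extPath_isExtension (μ : Λ.Path) (x : InfPath Λ) (h : Λ.s μ = x.val 0 0) :
    Λ.IsExtension μ x (extPath μ x h) := by
  refine ⟨h, fun n => ?_⟩
  set J := PreInf.bigN (0 : Fin k → ℕ) (Λ.d μ + n) with hJdef
  set q : Fin k → ℕ := fun c => J - n c with hq
  have hnq : n + q = cnst k J := by
    funext c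
    have h1 : (0 : Fin k → ℕ) c + (Λ.d μ + n) c ≤ J := PreInf.le_bigN _ _ c
    simp only [Pi.add_apply, Pi.zero_apply, zero_add] at h1 ⊢
    simp only [cnst, hq]
    omega
  have hr : Λ.s μ = Λ.r (x.val 0 n) := by rw [x.r_val]; exact h
  have hW : (extPre μ x h).W J = Λ.comp (Λ.comp μ (x.val 0 n)) (x.val (0 + n) q) := by
    show Λ.comp μ (x.val 0 (cnst k J)) = _
    have hsr : Λ.s (x.val 0 n) = Λ.r (x.val (0 + n) q) := by rw [x.s_val, x.r_val]
    rw [← hnq, ← x.comp_val 0 n q, ← Λ.comp_assoc _ _ _ hr hsr]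
  refine PreInf.toInf_val_eq _ (j := J) ?_
  refine isMid_zero_of_eq_comp ?_ ?_ hW
  · rw [Λ.s_comp _ _ hr, x.s_val, x.r_val]
  · rw [Λ.d_comp _ _ hr, x.d_val]

lemma extPath_inSub {T : Set Λ.Path} (hT : MaximalTail Λ T) {μ : Λ.Path} {x : InfPath Λ}
    (h : Λ.s μ = x.val 0 0) (hx : x.inSub (Λ.tailPaths T)) :
    (extPath μ x h).inSub (Λ.tailPaths T) := by
  refine PreInf.toInf_inSub _ hT (fun j => ?_)
  have hr : Λ.s μ = Λ.r (x.val 0 (cnst k j)) := by rw [x.r_val]; exact h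
  show Λ.s (Λ.comp μ (x.val 0 (cnst k j))) ∈ T
  rw [Λ.s_comp _ _ hr]
  exact hx 0 (cnst k j)

/-! ### infinite paths inside a maximal tail -/

noncomputable def chainStep {T : Set Λ.Path} (hT : MaximalTail Λ T) {q : Λ.Path}
    (hs : Λ.s q ∈ T) : Λ.Path := (hT.reaches (Λ.s q) hs (cnst k 1)).choose

lemma chainStep_spec {T : Set Λ.Path} (hT : MaximalTail Λ T) {q : Λ.Path} (hs : Λ.s q ∈ T) :
    Λ.r (chainStep hT hs) = Λ.s q ∧ Λ.d (chainStep hT hs) = cnst k 1 ∧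
      Λ.s (chainStep hT hs) ∈ T := (hT.reaches (Λ.s q) hs (cnst k 1)).choose_spec

noncomputable def chainAux {T : Set Λ.Path} (hT : MaximalTail Λ T) (v : Λ.Path) (hv : v ∈ T) :
    (j : ℕ) → {q : Λ.Path // Λ.s q ∈ T ∧ Λ.r q = v ∧ Λ.d q = cnst k j}
  | 0 => ⟨v, by rw [vertex_s (hT.vertex v hv)]; exact hv,
      vertex_r (hT.vertex v hv), hT.vertex v hv⟩
  | (j + 1) =>
    ⟨Λ.comp (chainAux hT v hv j).1 (chainStep hT (chainAux hT v hv j).2.1),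
      by rw [Λ.s_comp _ _ (chainStep_spec hT (chainAux hT v hv j).2.1).1.symm]
         exact (chainStep_spec hT (chainAux hT v hv j).2.1).2.2,
      by rw [Λ.r_comp _ _ (chainStep_spec hT (chainAux hT v hv j).2.1).1.symm]
         exact (chainAux hT v hv j).2.2.1,
      by rw [Λ.d_comp _ _ (chainStep_spec hT (chainAux hT v hv j).2.1).1.symm]
         funext c
         have h1 := congrFun (chainAux hT v hv j).2.2.2 c
         have h2 := congrFun (chainStep_spec hT (chainAux hT v hv j).2.1).2.1 c
         simp only [Pi.add_apply, cnst] at h1 h2 ⊢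
         omega⟩

noncomputable def tailPre {T : Set Λ.Path} (hT : MaximalTail Λ T) (v : Λ.Path) (hv : v ∈ T) :
    PreInf Λ where
  W j := (chainAux hT v hv j).1
  grow j := by
    refine ⟨chainStep hT (chainAux hT v hv j).2.1,
      (chainStep_spec hT (chainAux hT v hv j).2.1).1.symm, ?_⟩
    show (chainAux hT v hv (j + 1)).1 = _
    rfl
  big j c := by
    have h := (chainAux hT v hv j).2.2.2
    show j ≤ Λ.d (chainAux hT v hv j).1 c
    rw [h]; exact le_refl j

noncomputable def tailInf {T : Set Λ.Path} (hT : MaximalTail Λ T) (v : Λ.Path) (hv : v ∈ T) :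
    InfPath Λ := (tailPre hT v hv).toInf

end SSK
namespace SSK

open KGraph

variable {k : ℕ} {Λ : KGraph k}

lemma tailInf_val00 {T : Set Λ.Path} (hT : MaximalTail Λ T) (v : Λ.Path) (hv : v ∈ T) :
    (tailInf hT v hv).val 0 0 = v := by
  show (tailPre hT v hv).toInf.val 0 0 = v
  have h := (tailPre hT v hv).toInf_val_eq (j := 0) (isMid_r ((tailPre hT v hv).W 0))
  rw [h]
  exact (chainAux hT v hv 0).2.2.1

lemma tailInf_inSub {T : Set Λ.Path} (hT : MaximalTail Λ T) (v : Λ.Path) (hv : v ∈ T) :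
    (tailInf hT v hv).inSub (Λ.tailPaths T) :=
  PreInf.toInf_inSub _ hT (fun j => (chainAux hT v hv j).2.1)

/-! ### extension lemmas -/

lemma ext_prefix {μ : Λ.Path} {x z : InfPath Λ} (h : Λ.IsExtension μ x z) :
    z.val 0 (Λ.d μ) = μ := by
  have h2 := h.2 0
  rw [add_zero] at h2
  rw [h2, ← h.1, Λ.comp_id]

lemma ext_range00 {μ : Λ.Path} {x z : InfPath Λ} (h : Λ.IsExtension μ x z) :
    z.val 0 0 = Λ.r μ := by
  have hr := z.r_val 0 (Λ.d μ)
  rw [ext_prefix h] at hr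
  exact hr.symm

lemma ext_prefix_comp {C D : Λ.Path} {x z : InfPath Λ}
    (h : Λ.IsExtension (Λ.comp C D) x z) (hCD : Λ.s C = Λ.r D) : z.val 0 (Λ.d C) = C := by
  have hp := ext_prefix h
  rw [Λ.d_comp _ _ hCD] at hp
  have hcv := z.comp_val 0 (Λ.d C) (Λ.d D)
  refine comp_first_factor_eq ?_ hCD (z.d_val 0 (Λ.d C)) (hcv.trans hp)
  rw [z.s_val, z.r_val]

lemma ext_shift_comp {C D : Λ.Path} {x z : InfPath Λ}
    (h : Λ.IsExtension (Λ.comp C D) x z) (hCD : Λ.s C = Λ.r D) :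
    Λ.IsExtension D x (z.shift (Λ.d C)) := by
  have h1 : Λ.s D = x.val 0 0 := by rw [← Λ.s_comp _ _ hCD]; exact h.1
  refine ⟨h1, fun n => ?_⟩
  show z.val (0 + Λ.d C) (Λ.d D + n) = Λ.comp D (x.val 0 n)
  have hA := ext_prefix_comp h hCD
  have hDx : Λ.s D = Λ.r (x.val 0 n) := by rw [x.r_val]; exact h1
  have hcv := z.comp_val 0 (Λ.d C) (Λ.d D + n)
  rw [hA] at hcv
  have hidx : Λ.d C + (Λ.d D + n) = Λ.d (Λ.comp C D) + n := by
    rw [Λ.d_comp _ _ hCD, add_assoc]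
  rw [hidx, h.2 n, Λ.comp_assoc _ _ _ hCD hDx] at hcv
  refine comp_left_cancel ?_ ?_ ?_ hcv
  · rw [z.r_val, ← z.s_val 0 (Λ.d C), hA]
  · rw [Λ.r_comp _ _ hDx]; exact hCD
  · rw [z.d_val, Λ.d_comp _ _ hDx, x.d_val]

lemma ext_comp_ext {C D : Λ.Path} {x z Z : InfPath Λ} (hD : Λ.IsExtension D x z)
    (hC : Λ.IsExtension C z Z) (hCD : Λ.s C = Λ.r D) : Λ.IsExtension (Λ.comp C D) x Z := by
  refine ⟨by rw [Λ.s_comp _ _ hCD]; exact hD.1, fun n => ?_⟩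
  have hidx : Λ.d (Λ.comp C D) + n = Λ.d C + (Λ.d D + n) := by
    rw [Λ.d_comp _ _ hCD, add_assoc]
  have hDx : Λ.s D = Λ.r (x.val 0 n) := by rw [x.r_val]; exact hD.1
  rw [hidx, hC.2 (Λ.d D + n), hD.2 n, ← Λ.comp_assoc _ _ _ hCD hDx]

lemma isExtension_unique {μ : Λ.Path} {x z₁ z₂ : InfPath Λ} (h1 : Λ.IsExtension μ x z₁)
    (h2 : Λ.IsExtension μ x z₂) : z₁ = z₂ := by
  have key : ∀ z : InfPath Λ, Λ.IsExtension μ x z → ∀ p n : Fin k → ℕ,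
      IsMid Λ (Λ.comp μ (x.val 0 (cnst k (PreInf.bigN p n)))) p n (z.val p n) := by
    intro z hz p n
    set J := PreInf.bigN p n with hJ
    set q : Fin k → ℕ := fun c => Λ.d μ c + J - p c - n c with hq
    have hidx : Λ.d μ + cnst k J = p + (n + q) := by
      funext c
      have h1 := PreInf.le_bigN p n c
      simp only [Pi.add_apply, cnst, hq]
      omega
    have := isMid_val z p n q
    rw [← hidx, hz.2 (cnst k J)] at this
    exact this
  have h3 : ∀ p n, z₁.val p n = z₂.val p n :=
    fun p n => (key z₁ h1 p n).unique (key z₂ h2 p n)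
  exact infPath_ext h3

lemma ext_shift_eq {μ : Λ.Path} {x z : InfPath Λ} (h : Λ.IsExtension μ x z) :
    z.shift (Λ.d μ) = x := by
  refine infPath_ext (fun p n => ?_)
  show z.val (p + Λ.d μ) n = x.val p n
  set J := PreInf.bigN p n with hJ
  set q : Fin k → ℕ := fun c => J - n c with hq
  have hnq : n + q = cnst k J := by
    funext c
    have h1 := PreInf.le_bigN p n c
    simp only [Pi.add_apply, cnst, hq]
    omega
  have h0p : (0 : Fin k → ℕ) + p = p := zero_add p
  -- the long initial segment
  set W : Λ.Path := Λ.comp μ (x.val 0 (p + cnst k J)) with hW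
  have hμx : Λ.s μ = Λ.r (x.val 0 p) := by rw [x.r_val]; exact h.1
  have hMidx : IsMid Λ W (Λ.d μ + p) n (x.val p n) := by
    refine ⟨Λ.comp μ (x.val 0 p), x.val (p + n) q, ?_, ?_, ?_, x.d_val p n, ?_⟩
    · rw [Λ.s_comp _ _ hμx, x.s_val, x.r_val, h0p]
    · rw [x.s_val, x.r_val]
    · rw [Λ.d_comp _ _ hμx, x.d_val]
    · rw [x.comp_val p n q, hnq]
      have hsr : Λ.s (x.val 0 p) = Λ.r (x.val p (cnst k J)) := by
        rw [x.s_val, x.r_val, h0p]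
      have hcv : Λ.comp (x.val 0 p) (x.val p (cnst k J)) = x.val 0 (p + cnst k J) := by
        have := x.comp_val 0 p (cnst k J); rwa [h0p] at this
      rw [Λ.comp_assoc _ _ _ hμx hsr, hcv, hW]
  have hMidz : IsMid Λ W (Λ.d μ + p) n (z.val (Λ.d μ + p) n) := by
    have hidx : Λ.d μ + (p + cnst k J) = (Λ.d μ + p) + (n + q) := by
      funext c
      have h1 := PreInf.le_bigN p n c
      simp only [Pi.add_apply, cnst, hq]
      omega
    have := isMid_val z (Λ.d μ + p) n q
    rw [← hidx, h.2 (p + cnst k J)] at this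
    exact this
  have := hMidz.unique hMidx
  rw [add_comm p (Λ.d μ)]
  exact this

lemma isExtension_prefix_shift (y : InfPath Λ) (q : Fin k → ℕ) :
    Λ.IsExtension (y.val 0 q) (y.shift q) y := by
  constructor
  · show Λ.s (y.val 0 q) = y.val (0 + q) 0
    rw [y.s_val]
  · intro n
    rw [y.d_val 0 q]
    show y.val 0 (q + n) = Λ.comp (y.val 0 q) (y.val (0 + q) n)
    exact (y.comp_val 0 q n).symm

end SSK
namespace SSK

open KGraph

variable {k : ℕ} {Λ : KGraph k} {T : Set Λ.Path}

lemma mem_tailPaths {μ : Λ.Path} : μ ∈ Λ.tailPaths T ↔ Λ.s μ ∈ T := Iff.rfl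

lemma cyc_refl {μ : Λ.Path} (h : μ ∈ Λ.tailPaths T) :
    Λ.IsCyclinePair (Λ.tailPaths T) μ μ :=
  ⟨h, h, rfl, fun _ _ _ hz => hz⟩

lemma cyc_trans {μ ν ξ : Λ.Path} (h1 : Λ.IsCyclinePair (Λ.tailPaths T) μ ν)
    (h2 : Λ.IsCyclinePair (Λ.tailPaths T) ν ξ) : Λ.IsCyclinePair (Λ.tailPaths T) μ ξ :=
  ⟨h1.1, h2.2.1, h1.2.2.1.trans h2.2.2.1,
    fun x hx z hz => h1.2.2.2 x hx z (h2.2.2.2 x hx z hz)⟩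

lemma cyc_symm {μ ν : Λ.Path} (h : Λ.IsCyclinePair (Λ.tailPaths T) μ ν) :
    Λ.IsCyclinePair (Λ.tailPaths T) ν μ := by
  refine ⟨h.2.1, h.1, h.2.2.1.symm, fun x hx z hzμ => ?_⟩
  have hsν : Λ.s ν = x.val 0 0 := h.2.2.1 ▸ hzμ.1
  have hz' := extPath_isExtension ν x hsν
  have hz'' := h.2.2.2 x hx _ hz'
  rw [isExtension_unique hzμ hz'']
  exact hz'

lemma cyc_append (hT : MaximalTail Λ T) {μ ν γ : Λ.Path} (h : Λ.IsCyclinePair (Λ.tailPaths T) μ ν)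
    (hγ : γ ∈ Λ.tailPaths T) (hrγ : Λ.r γ = Λ.s μ) :
    Λ.IsCyclinePair (Λ.tailPaths T) (Λ.comp μ γ) (Λ.comp ν γ) := by
  have hμγ : Λ.s μ = Λ.r γ := hrγ.symm
  have hνγ : Λ.s ν = Λ.r γ := h.2.2.1 ▸ hμγ
  refine ⟨mem_tailPaths.2 (by rw [Λ.s_comp _ _ hμγ]; exact hγ),
    mem_tailPaths.2 (by rw [Λ.s_comp _ _ hνγ]; exact hγ),
    by rw [Λ.s_comp _ _ hμγ, Λ.s_comp _ _ hνγ], fun x hx z hz => ?_⟩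
  have hsγ : Λ.s γ = x.val 0 0 := by rw [← Λ.s_comp _ _ hνγ]; exact hz.1
  set x' := extPath γ x hsγ with hx'def
  have hx'ext : Λ.IsExtension γ x x' := extPath_isExtension γ x hsγ
  have hx'sub : x'.inSub (Λ.tailPaths T) := extPath_inSub hT hsγ hx
  -- z is an extension of ν by x'
  have hx'00 : x'.val 0 0 = Λ.r γ := ext_range00 hx'ext
  have hsνx' : Λ.s ν = x'.val 0 0 := by rw [hx'00]; exact hνγ
  have hz2 : Λ.IsExtension ν x' z := by
    have hz' := extPath_isExtension ν x' hsνx'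
    have hcomb := ext_comp_ext hx'ext hz' hνγ
    rw [isExtension_unique hz hcomb]
    exact hz'
  have hz3 : Λ.IsExtension μ x' z := h.2.2.2 x' hx'sub z hz2
  exact ext_comp_ext hx'ext hz3 hμγ

lemma cyc_prepend {μ ν l : Λ.Path} (h : Λ.IsCyclinePair (Λ.tailPaths T) μ ν)
    (hlμ : Λ.s l = Λ.r μ) (hlν : Λ.s l = Λ.r ν) :
    Λ.IsCyclinePair (Λ.tailPaths T) (Λ.comp l μ) (Λ.comp l ν) := by
  refine ⟨mem_tailPaths.2 (by rw [Λ.s_comp _ _ hlμ]; exact h.1),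
    mem_tailPaths.2 (by rw [Λ.s_comp _ _ hlν]; exact h.2.1),
    by rw [Λ.s_comp _ _ hlμ, Λ.s_comp _ _ hlν]; exact h.2.2.1, fun x hx z hz => ?_⟩
  have hz' : Λ.IsExtension ν x (z.shift (Λ.d l)) := ext_shift_comp hz hlν
  have hz'' : Λ.IsExtension μ x (z.shift (Λ.d l)) := h.2.2.2 x hx _ hz'
  constructor
  · rw [Λ.s_comp _ _ hlμ]; exact hz''.1
  · intro n
    have hidx : Λ.d (Λ.comp l μ) + n = Λ.d l + (Λ.d μ + n) := by
      rw [Λ.d_comp _ _ hlμ, add_assoc]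
    have hpre : z.val 0 (Λ.d l) = l := ext_prefix_comp hz hlν
    have hcv := z.comp_val 0 (Λ.d l) (Λ.d μ + n)
    rw [hpre] at hcv
    have hz''2 : z.val (0 + Λ.d l) (Λ.d μ + n) = Λ.comp μ (x.val 0 n) := hz''.2 n
    rw [hz''2] at hcv
    have hμx : Λ.s μ = Λ.r (x.val 0 n) := by rw [x.r_val]; exact hz''.1
    rw [hidx, ← hcv, Λ.comp_assoc _ _ _ hlμ hμx]

lemma cyc_left_cancel {C α β : Λ.Path}
    (h : Λ.IsCyclinePair (Λ.tailPaths T) (Λ.comp C α) (Λ.comp C β))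
    (hCα : Λ.s C = Λ.r α) (hCβ : Λ.s C = Λ.r β)
    (hα : α ∈ Λ.tailPaths T) (hβ : β ∈ Λ.tailPaths T) :
    Λ.IsCyclinePair (Λ.tailPaths T) α β := by
  refine ⟨hα, hβ, ?_, fun x hx z hz => ?_⟩
  · have := h.2.2.1
    rw [Λ.s_comp _ _ hCα, Λ.s_comp _ _ hCβ] at this
    exact this
  · have hsC : Λ.s C = z.val 0 0 := by rw [ext_range00 hz]; exact hCβ
    set Z := extPath C z hsC with hZdef
    have hZext : Λ.IsExtension C z Z := extPath_isExtension C z hsC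
    have hZ1 : Λ.IsExtension (Λ.comp C β) x Z := ext_comp_ext hz hZext hCβ
    have hZ2 : Λ.IsExtension (Λ.comp C α) x Z := h.2.2.2 x hx Z hZ1
    have hZ3 : Λ.IsExtension α x (Z.shift (Λ.d C)) := ext_shift_comp hZ2 hCα
    rwa [ext_shift_eq hZext] at hZ3

lemma cyc_eq_of_d_eq (hT : MaximalTail Λ T) {μ ν : Λ.Path} (h : Λ.IsCyclinePair (Λ.tailPaths T) μ ν)
    (hd : Λ.d μ = Λ.d ν) : μ = ν := by
  have hsν : Λ.s ν ∈ T := h.2.1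
  set x := tailInf hT (Λ.s ν) hsν with hxdef
  have hx00 : Λ.s ν = x.val 0 0 := (tailInf_val00 hT _ hsν).symm
  have hz := extPath_isExtension ν x hx00
  have hz2 := h.2.2.2 x (tailInf_inSub hT _ hsν) _ hz
  have h1 := ext_prefix hz2
  have h2 := ext_prefix hz
  rw [hd] at h1
  exact h1.symm.trans h2

lemma cyc_partner_unique (hT : MaximalTail Λ T) {μ ν₁ ν₂ : Λ.Path} (h1 : Λ.IsCyclinePair (Λ.tailPaths T) μ ν₁)
    (h2 : Λ.IsCyclinePair (Λ.tailPaths T) μ ν₂) (hd : Λ.d ν₁ = Λ.d ν₂) : ν₁ = ν₂ :=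
  cyc_eq_of_d_eq hT (cyc_trans (cyc_symm h1) h2) hd

lemma cyc_r_eq (hT : MaximalTail Λ T) {μ ν : Λ.Path} (h : Λ.IsCyclinePair (Λ.tailPaths T) μ ν) :
    Λ.r μ = Λ.r ν := by
  have hsν : Λ.s ν ∈ T := h.2.1
  set x := tailInf hT (Λ.s ν) hsν with hxdef
  have hx00 : Λ.s ν = x.val 0 0 := (tailInf_val00 hT _ hsν).symm
  have hz := extPath_isExtension ν x hx00
  have hz2 := h.2.2.2 x (tailInf_inSub hT _ hsν) _ hz
  rw [← ext_range00 hz2, ← ext_range00 hz]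

/-- the refactoring trick: a cycline pair `(F, G)` whose common source is the
range of `α` produces a cycline partner for `α` of any compatible degree. -/
lemma cyc_refactor (hT : MaximalTail Λ T) {F G α : Λ.Path} (hFG : Λ.IsCyclinePair (Λ.tailPaths T) F G)
    (hα : α ∈ Λ.tailPaths T) (hFα : Λ.s F = Λ.r α) (b : Fin k → ℕ)
    (hdeg : Λ.d G + Λ.d α = Λ.d F + b) :
    ∃ β, Λ.IsCyclinePair (Λ.tailPaths T) α β ∧ Λ.r β = Λ.r α ∧ Λ.d β = b ∧
      Λ.s β = Λ.s α := by
  have hGα : Λ.s G = Λ.r α := hFG.2.2.1 ▸ hFα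
  have hdW : Λ.d (Λ.comp G α) = Λ.d F + b := by rw [Λ.d_comp _ _ hGα]; exact hdeg
  obtain ⟨⟨F', β⟩, ⟨hs, hdF', hdβ, hc⟩, -⟩ := Λ.factor (Λ.comp G α) (Λ.d F) b hdW
  simp only at hs hdF' hdβ hc
  -- identify F' with F
  have hsα : Λ.s α ∈ T := hα
  set x₀ := tailInf hT (Λ.s α) hsα with hx₀def
  have hx00 : Λ.s (Λ.comp G α) = x₀.val 0 0 := by
    rw [Λ.s_comp _ _ hGα]; exact (tailInf_val00 hT _ hsα).symm
  set Zp := extPath (Λ.comp G α) x₀ hx00 with hZpdef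
  have hz₀ : Λ.IsExtension (Λ.comp G α) x₀ Zp := extPath_isExtension (Λ.comp G α) x₀ hx00
  have hpairGα : Λ.IsCyclinePair (Λ.tailPaths T) (Λ.comp F α) (Λ.comp G α) :=
    cyc_append hT hFG hα hFα.symm
  have hz₁ : Λ.IsExtension (Λ.comp F α) x₀ Zp :=
    hpairGα.2.2.2 x₀ (tailInf_inSub hT _ hsα) Zp hz₀
  have hF1 : Zp.val 0 (Λ.d F) = F := ext_prefix_comp hz₁ hFα
  have hz₂ : Λ.IsExtension (Λ.comp F' β) x₀ Zp := by rw [hc]; exact hz₀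
  have hF2 : Zp.val 0 (Λ.d F') = F' := ext_prefix_comp hz₂ hs
  rw [hdF'] at hF2
  have hF'F : F' = F := by rw [← hF2, hF1]
  subst hF'F
  have hsβ : Λ.s β = Λ.s α := by
    have h1 : Λ.s (Λ.comp G α) = Λ.s α := Λ.s_comp _ _ hGα
    have h2 : Λ.s (Λ.comp F' β) = Λ.s β := Λ.s_comp _ _ hs
    rw [← hc, h2] at h1
    exact h1
  have hβmem : β ∈ Λ.tailPaths T := mem_tailPaths.2 (by rw [hsβ]; exact hsα)
  have hrβ : Λ.r β = Λ.r α := by rw [← hs, hFα]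
  have hcyc2 : Λ.IsCyclinePair (Λ.tailPaths T) (Λ.comp F' α) (Λ.comp F' β) := by
    rw [hc]; exact hpairGα
  exact ⟨β, cyc_left_cancel hcyc2 hFα hs hα hβmem, hrβ, hdβ, hsβ⟩

end SSK
namespace SSK

open KGraph

variable {k : ℕ} {Λ : KGraph k} {T : Set Λ.Path}

/-! ### the periodicity group -/

lemma per_zero_mem (hT : MaximalTail Λ T) :
    (0 : Fin k → ℤ) ∈ Λ.PerPair (Λ.tailPaths T) := by
  obtain ⟨v, hv⟩ := hT.nonempty
  have hvm : v ∈ Λ.tailPaths T :=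
    mem_tailPaths.2 (by rw [vertex_s (hT.vertex v hv)]; exact hv)
  exact ⟨v, v, cyc_refl hvm, by funext i; simp⟩

lemma per_neg_mem {m : Fin k → ℤ} (h : m ∈ Λ.PerPair (Λ.tailPaths T)) :
    -m ∈ Λ.PerPair (Λ.tailPaths T) := by
  obtain ⟨μ, ν, hp, hm⟩ := h
  refine ⟨ν, μ, cyc_symm hp, ?_⟩
  subst hm; funext i; simp

lemma per_add_mem (hT : MaximalTail Λ T) {m₁ m₂ : Fin k → ℤ}
    (h1 : m₁ ∈ Λ.PerPair (Λ.tailPaths T)) (h2 : m₂ ∈ Λ.PerPair (Λ.tailPaths T)) :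
    m₁ + m₂ ∈ Λ.PerPair (Λ.tailPaths T) := by
  obtain ⟨μ₁, ν₁, hp1, hm1⟩ := h1
  obtain ⟨μ₂, ν₂, hp2, hm2⟩ := h2
  obtain ⟨v₀, hv₀, ⟨l₁, hl₁r, hl₁s⟩, ⟨l₂, hl₂r, hl₂s⟩⟩ :=
    hT.directed (Λ.s μ₁) hp1.1 (Λ.s μ₂) hp2.1
  have hl₁T : l₁ ∈ Λ.tailPaths T := mem_tailPaths.2 (by rw [hl₁s]; exact hv₀)
  have hl₂T : l₂ ∈ Λ.tailPaths T := mem_tailPaths.2 (by rw [hl₂s]; exact hv₀)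
  have hpF1 := cyc_append hT hp1 hl₁T hl₁r
  have hpF2 := cyc_append hT hp2 hl₂T hl₂r
  obtain ⟨α, hαr, hαd, hαs⟩ := hT.reaches v₀ hv₀ (Λ.d μ₁ + Λ.d μ₂)
  have hαT : α ∈ Λ.tailPaths T := hαs
  have hμ₁l : Λ.s μ₁ = Λ.r l₁ := hl₁r.symm
  have hν₁l : Λ.s ν₁ = Λ.r l₁ := hp1.2.2.1 ▸ hμ₁l
  have hμ₂l : Λ.s μ₂ = Λ.r l₂ := hl₂r.symm
  have hν₂l : Λ.s ν₂ = Λ.r l₂ := hp2.2.2.1 ▸ hμ₂l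
  have hsF1 : Λ.s (Λ.comp μ₁ l₁) = Λ.r α := by rw [Λ.s_comp _ _ hμ₁l, hl₁s, hαr]
  have hdeg1 : Λ.d (Λ.comp ν₁ l₁) + Λ.d α = Λ.d (Λ.comp μ₁ l₁) + (Λ.d ν₁ + Λ.d μ₂) := by
    rw [Λ.d_comp _ _ hν₁l, Λ.d_comp _ _ hμ₁l, hαd]
    funext c; simp only [Pi.add_apply]; omega
  obtain ⟨β₁, hcyc1, hrβ₁, hdβ₁, hsβ₁⟩ := cyc_refactor hT hpF1 hαT hsF1 _ hdeg1
  have hβ₁T : β₁ ∈ Λ.tailPaths T := mem_tailPaths.2 (by rw [hsβ₁]; exact hαs)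
  have hsF2 : Λ.s (Λ.comp μ₂ l₂) = Λ.r β₁ := by
    rw [Λ.s_comp _ _ hμ₂l, hl₂s, hrβ₁, hαr]
  have hdeg2 : Λ.d (Λ.comp ν₂ l₂) + Λ.d β₁ = Λ.d (Λ.comp μ₂ l₂) + (Λ.d ν₁ + Λ.d ν₂) := by
    rw [Λ.d_comp _ _ hν₂l, Λ.d_comp _ _ hμ₂l, hdβ₁]
    funext c; simp only [Pi.add_apply]; omega
  obtain ⟨β₂, hcyc2, hrβ₂, hdβ₂, hsβ₂⟩ := cyc_refactor hT hpF2 hβ₁T hsF2 _ hdeg2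
  refine ⟨α, β₂, cyc_trans hcyc1 hcyc2, ?_⟩
  subst hm1; subst hm2
  funext i
  have h1 := congrFun hαd i
  have h2 := congrFun hdβ₂ i
  simp only [Pi.add_apply] at h1 h2 ⊢
  omega

noncomputable def perSubgroup (hT : MaximalTail Λ T) : AddSubgroup (Fin k → ℤ) where
  carrier := Λ.PerPair (Λ.tailPaths T)
  zero_mem' := per_zero_mem hT
  add_mem' := per_add_mem hT
  neg_mem' := per_neg_mem

/-! ### Dickson-type lemmas -/

def QLE (x y : Fin k → ℤ) : Prop := ∀ c, (0 ≤ x c ∧ x c ≤ y c) ∨ (y c ≤ x c ∧ x c ≤ 0)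

lemma qle_refl (x : Fin k → ℤ) : QLE x x := fun c => by omega

lemma qle_trans {x y z : Fin k → ℤ} (h1 : QLE x y) (h2 : QLE y z) : QLE x z :=
  fun c => by have := h1 c; have := h2 c; omega

def nrm (m : Fin k → ℤ) : ℕ := ∑ c, (m c).natAbs

lemma qle_nrm_le {x y : Fin k → ℤ} (h : QLE x y) : nrm x ≤ nrm y :=
  Finset.sum_le_sum fun c _ => by have := h c; omega

lemma qle_eq_of_nrm_ge {x y : Fin k → ℤ} (h : QLE x y) (hn : nrm y ≤ nrm x) : x = y := by
  have hc : ∀ c, (x c).natAbs = (y c).natAbs := by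
    by_contra hcon
    push_neg at hcon; obtain ⟨c₀, hc₀⟩ := hcon
    have hlt : (x c₀).natAbs < (y c₀).natAbs := by have := h c₀; omega
    have : nrm x < nrm y :=
      Finset.sum_lt_sum (fun c _ => by have := h c; omega) ⟨c₀, Finset.mem_univ _, hlt⟩
    omega
  funext c; have := h c; have := hc c; omega

lemma nrm_eq_zero {m : Fin k → ℤ} (h : nrm m = 0) : m = 0 := by
  funext c
  have h2 : (m c).natAbs ≤ nrm m := Finset.single_le_sum (f := fun c => (m c).natAbs)
    (fun i _ => Nat.zero_le _) (Finset.mem_univ c)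
  rw [h] at h2
  show m c = 0
  omega

lemma exists_min_qle (A : Set (Fin k → ℤ)) (m : Fin k → ℤ) (hm : m ∈ A) :
    ∃ s ∈ A, QLE s m ∧ ∀ x ∈ A, QLE x s → x = s := by
  set B := {x | x ∈ A ∧ QLE x m} with hB
  have hBfin : B.Finite := by
    refine Set.Finite.subset
      (Set.Finite.pi (fun c => Set.finite_Icc (min (m c) 0) (max (m c) 0))) ?_
    intro x hx
    rw [Set.mem_pi]
    intro c _
    have := hx.2 c
    simp only [Set.mem_Icc]
    omega
  have hBne : B.Nonempty := ⟨m, hm, qle_refl m⟩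
  obtain ⟨s, hsB, hsmin⟩ := Set.exists_min_image B nrm hBfin hBne
  refine ⟨s, hsB.1, hsB.2, fun x hx hxs => ?_⟩
  have hxB : x ∈ B := ⟨hx, qle_trans hxs hsB.2⟩
  exact qle_eq_of_nrm_ge hxs (hsmin x hxB)

lemma minset_finite (A : Set (Fin k → ℤ)) :
    {s | s ∈ A ∧ ∀ x ∈ A, QLE x s → x = s}.Finite := by
  set MS := {s | s ∈ A ∧ ∀ x ∈ A, QLE x s → x = s} with hMS
  have hsub : MS ⊆ ⋃ ε : Fin k → Bool, {s ∈ MS | ∀ c, ε c = decide (0 ≤ s c)} := by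
    intro s hs
    exact Set.mem_iUnion.2 ⟨fun c => decide (0 ≤ s c), hs, fun c => rfl⟩
  refine Set.Finite.subset (Set.finite_iUnion fun ε => ?_) hsub
  by_contra hinf
  have hinf' : {s | s ∈ MS ∧ ∀ c, ε c = decide (0 ≤ s c)}.Infinite := hinf
  set f := hinf'.natEmbedding with hf
  haveI hwo : IsWellOrder ℕ (· < ·) := inferInstance
  have key := wellQuasiOrdered_le (α := Fin k → ℕ)
    (fun n c => (((f n : Fin k → ℤ)) c).natAbs)
  obtain ⟨a, b, hab, hle⟩ := key
  have hQLE : QLE ((f a : Fin k → ℤ)) ((f b : Fin k → ℤ)) := by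
    intro c
    have h1 := (f a).2.2 c
    have h2 := (f b).2.2 c
    have h3 : (0 ≤ (f a : Fin k → ℤ) c) ↔ (0 ≤ (f b : Fin k → ℤ) c) :=
      decide_eq_decide.mp (h1.symm.trans h2)
    have h4 : ((f a : Fin k → ℤ) c).natAbs ≤ ((f b : Fin k → ℤ) c).natAbs := hle c
    omega
  have heq : (f a : Fin k → ℤ) = (f b : Fin k → ℤ) :=
    (f b).2.1.2 (f a : Fin k → ℤ) (f a).2.1.1 hQLE
  have : a = b := f.injective (Subtype.ext heq)
  omega

end SSK
namespace SSK

open KGraph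

variable {k : ℕ} {Λ : KGraph k} {T : Set Λ.Path}

/-- chaining refactor steps along a bounded-step decomposition. -/
lemma walk (hT : MaximalTail Λ T) (v : Λ.Path) (S : Set (Fin k → ℤ))
    (hS : S ⊆ Λ.PerPair (Λ.tailPaths T))
    (hreal : ∀ s ∈ S, ∃ F G, Λ.IsCyclinePair (Λ.tailPaths T) F G ∧ Λ.s F = v ∧
      ∀ c, (Λ.d F c : ℤ) - Λ.d G c = s c)
    (hcov : ∀ m ∈ Λ.PerPair (Λ.tailPaths T), m ≠ 0 → ∃ s ∈ S, s ≠ 0 ∧ QLE s m) :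
    ∀ (N : ℕ) (m : Fin k → ℤ), nrm m ≤ N → m ∈ Λ.PerPair (Λ.tailPaths T) →
      ∀ (a b : Fin k → ℕ), (∀ c, (a c : ℤ) - b c = m c) →
      ∀ μ, μ ∈ Λ.tailPaths T → Λ.r μ = v → Λ.d μ = a →
      ∃ ν, Λ.IsCyclinePair (Λ.tailPaths T) μ ν ∧ Λ.r ν = v ∧ Λ.d ν = b := by
  intro N
  induction N with
  | zero =>
    intro m hnrm hm a b hab μ hμT hμr hμd
    have hm0 : m = 0 := nrm_eq_zero (Nat.le_zero.mp hnrm)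
    subst hm0
    have hba : a = b := by
      funext c
      have := hab c
      simp only [Pi.zero_apply] at this
      omega
    exact ⟨μ, cyc_refl hμT, hμr, by rw [hμd, hba]⟩
  | succ N ih =>
    intro m hnrm hm a b hab μ hμT hμr hμd
    by_cases hm0 : m = 0
    · subst hm0
      have hba : a = b := by
        funext c
        have := hab c
        simp only [Pi.zero_apply] at this
        omega
      exact ⟨μ, cyc_refl hμT, hμr, by rw [hμd, hba]⟩
    · obtain ⟨s, hsS, hs0, hsq⟩ := hcov m hm hm0
      obtain ⟨F, G, hFG, hsF, hdFG⟩ := hreal s hsS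
      have hb'0 : ∀ c, (0 : ℤ) ≤ (a c : ℤ) - s c := by
        intro c
        have h1 := hsq c
        have h2 := hab c
        omega
      set b' : Fin k → ℕ := fun c => ((a c : ℤ) - s c).toNat with hb'def
      have hb' : ∀ c, (b' c : ℤ) = (a c : ℤ) - s c := fun c =>
        Int.toNat_of_nonneg (hb'0 c)
      have hFα : Λ.s F = Λ.r μ := hsF.trans hμr.symm
      have hdeg : Λ.d G + Λ.d μ = Λ.d F + b' := by
        funext c
        have h1 := hdFG c
        have h2 := hb' c
        have h3 := congrFun hμd c
        simp only [Pi.add_apply]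
        omega
      obtain ⟨β, hcycβ, hrβ, hdβ, hsβ⟩ := cyc_refactor hT hFG hμT hFα b' hdeg
      have hβT : β ∈ Λ.tailPaths T := mem_tailPaths.2 (by rw [hsβ]; exact hμT)
      have hrβv : Λ.r β = v := by rw [hrβ, hμr]
      set m' := m - s with hm'def
      have hm' : m' ∈ Λ.PerPair (Λ.tailPaths T) := by
        have := (perSubgroup hT).sub_mem hm (hS hsS)
        exact this
      have hnrm' : nrm m' ≤ N := by
        have hsum : ∀ c, (m' c).natAbs + (s c).natAbs = (m c).natAbs := by
          intro c
          have := hsq c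
          simp only [hm'def, Pi.sub_apply]
          omega
        have htot : nrm m' + nrm s = nrm m := by
          unfold nrm
          rw [← Finset.sum_add_distrib]
          exact Finset.sum_congr rfl (fun c _ => hsum c)
        have hspos : 1 ≤ nrm s := by
          by_contra hcon
          exact hs0 (nrm_eq_zero (by omega))
        omega
      have hab' : ∀ c, (b' c : ℤ) - b c = m' c := by
        intro c
        have h1 := hb' c
        have h2 := hab c
        simp only [hm'def, Pi.sub_apply]
        omega
      obtain ⟨ν, hcycν, hrν, hdν⟩ := ih m' hnrm' hm' b' b hab' β hβT hrβv hdβ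
      exact ⟨ν, cyc_trans hcycβ hcycν, hrν, hdν⟩

/-- a common downstream vertex carrying source-`v` realizers for a list of
elements of `Per`. -/
lemma realizers_downstream (hT : MaximalTail Λ T) (L : List (Fin k → ℤ))
    (hL : ∀ s ∈ L, s ∈ Λ.PerPair (Λ.tailPaths T)) :
    ∃ v ∈ T, ∀ s ∈ L, ∃ F G, Λ.IsCyclinePair (Λ.tailPaths T) F G ∧ Λ.s F = v ∧
      ∀ c, (Λ.d F c : ℤ) - Λ.d G c = s c := by
  induction L with
  | nil =>
    obtain ⟨v, hv⟩ := hT.nonempty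
    exact ⟨v, hv, by simp⟩
  | cons s L ih =>
    obtain ⟨v', hv', hreal'⟩ := ih (fun x hx => hL x (List.mem_cons_of_mem _ hx))
    obtain ⟨μ, ν, hp, hm⟩ := hL s (List.mem_cons_self (a := s) (l := L))
    obtain ⟨w, hw, ⟨γ₁, hγ₁r, hγ₁s⟩, ⟨γ₂, hγ₂r, hγ₂s⟩⟩ := hT.directed (Λ.s μ) hp.1 v' hv'
    have hγ₁T : γ₁ ∈ Λ.tailPaths T := mem_tailPaths.2 (by rw [hγ₁s]; exact hw)
    have hγ₂T : γ₂ ∈ Λ.tailPaths T := mem_tailPaths.2 (by rw [hγ₂s]; exact hw)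
    refine ⟨w, hw, fun t ht => ?_⟩
    rcases List.mem_cons.mp ht with rfl | ht'
    · have hpair := cyc_append hT hp hγ₁T hγ₁r
      have hμγ : Λ.s μ = Λ.r γ₁ := hγ₁r.symm
      have hνγ : Λ.s ν = Λ.r γ₁ := hp.2.2.1 ▸ hμγ
      refine ⟨Λ.comp μ γ₁, Λ.comp ν γ₁, hpair, by rw [Λ.s_comp _ _ hμγ]; exact hγ₁s,
        fun c => ?_⟩
      rw [Λ.d_comp _ _ hμγ, Λ.d_comp _ _ hνγ]
      have := congrFun hm c
      simp only [Pi.add_apply] at this ⊢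
      push_cast
      omega
    · obtain ⟨F, G, hFG, hsF, hdFG⟩ := hreal' t ht'
      have hrγF : Λ.r γ₂ = Λ.s F := hγ₂r.trans hsF.symm
      have hpair := cyc_append hT hFG hγ₂T hrγF
      have hFγ : Λ.s F = Λ.r γ₂ := hrγF.symm
      have hGγ : Λ.s G = Λ.r γ₂ := hFG.2.2.1 ▸ hFγ
      refine ⟨Λ.comp F γ₂, Λ.comp G γ₂, hpair, by rw [Λ.s_comp _ _ hFγ]; exact hγ₂s,
        fun c => ?_⟩
      rw [Λ.d_comp _ _ hFγ, Λ.d_comp _ _ hGγ]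
      have := hdFG c
      simp only [Pi.add_apply]
      push_cast
      omega

/-- there is a vertex of `T` which lies in `H_T`. -/
lemma HSet_nonempty (hT : MaximalTail Λ T) : (Λ.HSet T).Nonempty := by
  classical
  set PP := Λ.PerPair (Λ.tailPaths T) with hPP
  set A := {x | x ∈ PP ∧ x ≠ 0} with hA
  set MS := {s | s ∈ A ∧ ∀ x ∈ A, QLE x s → x = s} with hMS
  have hMSfin : MS.Finite := minset_finite A
  have hMSL : ∀ s ∈ hMSfin.toFinset.toList, s ∈ PP := by
    intro s hs
    rw [Finset.mem_toList, Set.Finite.mem_toFinset] at hs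
    exact hs.1.1
  obtain ⟨v, hv, hrealL⟩ := realizers_downstream hT hMSfin.toFinset.toList hMSL
  have hreal : ∀ s ∈ MS, ∃ F G, Λ.IsCyclinePair (Λ.tailPaths T) F G ∧ Λ.s F = v ∧
      ∀ c, (Λ.d F c : ℤ) - Λ.d G c = s c := by
    intro s hs
    exact hrealL s (by rw [Finset.mem_toList, Set.Finite.mem_toFinset]; exact hs)
  have hScov : ∀ m ∈ PP, m ≠ 0 → ∃ s ∈ MS, s ≠ 0 ∧ QLE s m := by
    intro m hm hm0
    obtain ⟨s, hsA, hsq, hsmin⟩ := exists_min_qle A m ⟨hm, hm0⟩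
    exact ⟨s, ⟨hsA, hsmin⟩, hsA.2, hsq⟩
  have hSsub : MS ⊆ PP := fun s hs => hs.1.1
  refine ⟨v, hv, fun p q hpq μ hrμ hdμ hsμ => ?_⟩
  set m := fun i => (p i : ℤ) - (q i : ℤ) with hm
  have hab : ∀ c, (p c : ℤ) - q c = m c := fun c => rfl
  obtain ⟨ν, hcyc, hrν, hdν⟩ := walk hT v MS hSsub hreal hScov (nrm m) m le_rfl hpq
    p q hab μ hsμ hrμ hdμ
  refine ⟨ν, ⟨hrν, hdν, hcyc⟩, fun y hy => ?_⟩
  exact cyc_partner_unique hT hy.2.2 hcyc (hy.2.1.trans hdν.symm)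

/-- `H_T` is hereditary. -/
lemma HSet_hereditary (hT : MaximalTail Λ T) {l : Λ.Path} (hrl : Λ.r l ∈ Λ.HSet T)
    (hsl : Λ.s l ∈ T) : Λ.s l ∈ Λ.HSet T := by
  obtain ⟨hvT, hv⟩ := hrl
  refine ⟨hsl, fun p q hpq μ hrμ hdμ hsμ => ?_⟩
  have hlμ : Λ.s l = Λ.r μ := hrμ.symm
  have hpq' : (fun i => ((Λ.d l + p) i : ℤ) - ((Λ.d l + q) i : ℤ))
      ∈ Λ.PerPair (Λ.tailPaths T) := by
    have : (fun i => ((Λ.d l + p) i : ℤ) - ((Λ.d l + q) i : ℤ))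
        = fun i => (p i : ℤ) - (q i : ℤ) := by
      funext i; simp only [Pi.add_apply]; push_cast; ring
    rw [this]; exact hpq
  obtain ⟨ν', ⟨hrν', hdν', hcν'⟩, huniq⟩ := hv (Λ.d l + p) (Λ.d l + q) hpq' (Λ.comp l μ)
    (by rw [Λ.r_comp _ _ hlμ]) (by rw [Λ.d_comp _ _ hlμ, hdμ]) (by rw [Λ.s_comp _ _ hlμ]; exact hsμ)
  -- factor ν' = l' ν and identify l' = l
  obtain ⟨⟨l', ν⟩, ⟨hs, hdl', hdν, hc⟩, -⟩ := Λ.factor ν' (Λ.d l) q hdν'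
  simp only at hs hdl' hdν hc
  have hsν'μ : Λ.s ν' = Λ.s μ := by
    have := hcν'.2.2.1
    rw [Λ.s_comp _ _ hlμ] at this
    exact this.symm
  set x₀ := tailInf hT (Λ.s μ) hsμ with hx₀def
  have hx00 : Λ.s ν' = x₀.val 0 0 := by rw [hsν'μ]; exact (tailInf_val00 hT _ hsμ).symm
  set Zp := extPath ν' x₀ hx00 with hZpdef
  have hz₀ : Λ.IsExtension ν' x₀ Zp := extPath_isExtension ν' x₀ hx00
  have hz₁ : Λ.IsExtension (Λ.comp l μ) x₀ Zp :=
    hcν'.2.2.2 x₀ (tailInf_inSub hT _ hsμ) Zp hz₀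
  have hl1 : Zp.val 0 (Λ.d l) = l := ext_prefix_comp hz₁ hlμ
  have hz₂ : Λ.IsExtension (Λ.comp l' ν) x₀ Zp := by rw [hc]; exact hz₀
  have hl2 : Zp.val 0 (Λ.d l') = l' := ext_prefix_comp hz₂ hs
  rw [hdl'] at hl2
  have hl'l : l' = l := by rw [← hl2, hl1]
  rw [hl'l] at hc hs
  have hsν : Λ.s ν = Λ.s μ := by
    have h1 : Λ.s ν' = Λ.s ν := by rw [← hc, Λ.s_comp _ _ hs]
    rw [← h1]; exact hsν'μ
  have hνT : ν ∈ Λ.tailPaths T := mem_tailPaths.2 (by rw [hsν]; exact hsμ)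
  have hrν : Λ.r ν = Λ.s l := by rw [← hs]
  -- (μ, ν) is a cycline pair
  have hcyc : Λ.IsCyclinePair (Λ.tailPaths T) μ ν := by
    refine ⟨hsμ, hνT, hsν.symm, fun x hx z hz => ?_⟩
    have hsl' : Λ.s l = z.val 0 0 := by rw [ext_range00 hz, hs]
    set Z := extPath l z hsl' with hZdef
    have hZext : Λ.IsExtension l z Z := extPath_isExtension l z hsl'
    have hZ1 : Λ.IsExtension (Λ.comp l ν) x Z := ext_comp_ext hz hZext hs
    have hZ2 : Λ.IsExtension ν' x Z := by rw [← hc]; exact hZ1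
    have hZ3 : Λ.IsExtension (Λ.comp l μ) x Z := hcν'.2.2.2 x hx Z hZ2
    have hZ4 : Λ.IsExtension μ x (Z.shift (Λ.d l)) := ext_shift_comp hZ3 hlμ
    rwa [ext_shift_eq hZext] at hZ4
  refine ⟨ν, ⟨hrν, hdν, hcyc⟩, fun y hy => ?_⟩
  -- uniqueness
  obtain ⟨hry, hdy, hcy⟩ := hy
  have hly : Λ.s l = Λ.r y := by rw [hry]
  have hpairy := cyc_prepend hcy hlμ hly
  have hpairν := cyc_prepend hcyc hlμ hs
  have h1 : Λ.comp l y = ν' := huniq (Λ.comp l y)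
    ⟨by rw [Λ.r_comp _ _ hly], by rw [Λ.d_comp _ _ hly, hdy], hpairy⟩
  have h2 : Λ.comp l ν = ν' := huniq (Λ.comp l ν)
    ⟨by rw [Λ.r_comp _ _ hs], by rw [Λ.d_comp _ _ hs, hdν], hpairν⟩
  exact comp_left_cancel hly hs (hdy.trans hdν.symm) (h1.trans h2.symm)

end SSK
namespace SSK

open KGraph

variable {k : ℕ} {G : Type} [Group G] [Countable G] {Λ : KGraph k} {T : Set Λ.Path}

lemma mem_cornerPaths {H : Set Λ.Path} {μ : Λ.Path} :
    μ ∈ Λ.cornerPaths T H ↔ Λ.s μ ∈ T ∧ Λ.r μ ∈ H := Iff.rfl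

lemma corner_subset {H : Set Λ.Path} : Λ.cornerPaths T H ⊆ Λ.tailPaths T :=
  fun _ h => h.1

lemma inSub_mono {P Q : Set Λ.Path} (h : P ⊆ Q) {x : InfPath Λ} (hx : x.inSub P) :
    x.inSub Q := fun p n => h (hx p n)

lemma corner_inSub (hT : MaximalTail Λ T) {x : InfPath Λ}
    (hx : x.inSub (Λ.tailPaths T)) (h0 : x.val 0 0 ∈ Λ.HSet T) :
    x.inSub (Λ.cornerPaths T (Λ.HSet T)) := by
  intro p n
  have h0p : (0 : Fin k → ℕ) + p = p := zero_add p
  have hseg : Λ.r (x.val 0 p) ∈ Λ.HSet T := by rw [x.r_val]; exact h0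
  have hsT : Λ.s (x.val 0 p) ∈ T := hx 0 p
  have hmem : Λ.s (x.val 0 p) ∈ Λ.HSet T := HSet_hereditary hT hseg hsT
  rw [x.s_val, h0p] at hmem
  refine ⟨hx p n, ?_⟩
  rw [x.r_val]
  exact hmem

variable (S : SelfSimilarSys k G Λ)

lemma pair_to_triple {P : Set Λ.Path} {μ ν : Λ.Path} (h : Λ.IsCyclinePair P μ ν) :
    S.IsCyclineTriple P μ 1 ν := by
  refine ⟨h.1, h.2.1, by rw [S.act_one]; exact h.2.2.1, fun x hx hsx y hy z hz => ?_⟩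
  have hext := h.2.2.2 x hx z hz
  have hyx : ∀ n, y.val 0 n = x.val 0 n := by
    intro n; rw [hy n, S.act_one]
  exact ⟨hext.1.trans (hyx 0).symm, fun n => by rw [hyx n]; exact hext.2 n⟩

lemma triple_one_to_pair {P : Set Λ.Path} {μ ν : Λ.Path} (h : S.IsCyclineTriple P μ 1 ν) :
    Λ.IsCyclinePair P μ ν := by
  refine ⟨h.1, h.2.1, by have := h.2.2.1; rwa [S.act_one] at this, fun x hx z hz => ?_⟩
  have hy : S.IsGAct 1 x x := fun n => (S.act_one _).symm
  exact h.2.2.2 x hx hz.1 x hy z hz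

lemma perTriple_eq_perPair_tail (hT : MaximalTail Λ T)
    (hcyc : ∀ μ g ν, S.IsCyclineTriple (Λ.tailPaths T) μ g ν → g = 1) :
    S.PerTriple (Λ.tailPaths T) = Λ.PerPair (Λ.tailPaths T) := by
  ext m
  constructor
  · rintro ⟨μ, g, ν, htr, hm⟩
    have hg := hcyc μ g ν htr
    subst hg
    exact ⟨μ, ν, triple_one_to_pair S htr, hm⟩
  · rintro ⟨μ, ν, hp, hm⟩
    exact ⟨μ, 1, ν, pair_to_triple S hp, hm⟩

lemma corner_triple_to_tail (hT : MaximalTail Λ T) {μ : Λ.Path} {g : G} {ν : Λ.Path}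
    (htr : S.IsCyclineTriple (Λ.cornerPaths T (Λ.HSet T)) μ g ν) :
    S.IsCyclineTriple (Λ.tailPaths T) μ g ν := by
  have hsν : Λ.s ν ∈ Λ.HSet T := HSet_hereditary hT htr.2.1.2 htr.2.1.1
  refine ⟨corner_subset htr.1, corner_subset htr.2.1, htr.2.2.1,
    fun x hx hsx y hy z hz => ?_⟩
  exact htr.2.2.2 x (corner_inSub hT hx (by rw [← hsx]; exact hsν)) hsx y hy z hz

lemma corner_pair_to_tail (hT : MaximalTail Λ T) {μ ν : Λ.Path}
    (hp : Λ.IsCyclinePair (Λ.cornerPaths T (Λ.HSet T)) μ ν) :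
    Λ.IsCyclinePair (Λ.tailPaths T) μ ν := by
  have hsν : Λ.s ν ∈ Λ.HSet T := HSet_hereditary hT hp.2.1.2 hp.2.1.1
  refine ⟨corner_subset hp.1, corner_subset hp.2.1, hp.2.2.1, fun x hx z hz => ?_⟩
  exact hp.2.2.2 x (corner_inSub hT hx (by rw [← hz.1]; exact hsν)) z hz

lemma perTriple_eq_perPair_corner (hT : MaximalTail Λ T)
    (hcyc : ∀ μ g ν, S.IsCyclineTriple (Λ.tailPaths T) μ g ν → g = 1) :
    S.PerTriple (Λ.cornerPaths T (Λ.HSet T)) = Λ.PerPair (Λ.cornerPaths T (Λ.HSet T)) := by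
  ext m
  constructor
  · rintro ⟨μ, g, ν, htr, hm⟩
    have hg := hcyc μ g ν (corner_triple_to_tail S hT htr)
    subst hg
    exact ⟨μ, ν, triple_one_to_pair S htr, hm⟩
  · rintro ⟨μ, ν, hp, hm⟩
    exact ⟨μ, 1, ν, pair_to_triple S hp, hm⟩

lemma perPair_corner_eq_tail (hT : MaximalTail Λ T) :
    Λ.PerPair (Λ.cornerPaths T (Λ.HSet T)) = Λ.PerPair (Λ.tailPaths T) := by
  ext m
  constructor
  · rintro ⟨μ, ν, hp, hm⟩
    exact ⟨μ, ν, corner_pair_to_tail hT hp, hm⟩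
  · rintro ⟨μ, ν, hp, hm⟩
    obtain ⟨v, hvH⟩ := HSet_nonempty hT
    obtain ⟨μ₁, hrμ₁, hdμ₁, hsμ₁⟩ := hT.reaches v hvH.1 (Λ.d μ)
    have hm' : (fun i => ((Λ.d μ) i : ℤ) - ((Λ.d ν) i : ℤ)) ∈ Λ.PerPair (Λ.tailPaths T) :=
      ⟨μ, ν, hp, rfl⟩
    obtain ⟨ν₁, ⟨hrν₁, hdν₁, hcν₁⟩, -⟩ := hvH.2 (Λ.d μ) (Λ.d ν) hm' μ₁ hrμ₁ hdμ₁ hsμ₁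
    refine ⟨μ₁, ν₁, ?_, ?_⟩
    · refine ⟨⟨hsμ₁, by rw [hrμ₁]; exact hvH⟩, ⟨hcν₁.2.1, by rw [hrν₁]; exact hvH⟩,
        hcν₁.2.2.1, fun x hx z hz => ?_⟩
      exact hcν₁.2.2.2 x (inSub_mono corner_subset hx) z hz
    · rw [hdμ₁, hdν₁]; exact hm

end SSK

/-- For a pseudo free self-similar `k`-graph `(G, Λ)` with `g · v = v` for
all vertices `v`, and a maximal tail `T` of `Λ`: if every cycline triple of
`(G, ΛT)` is a cycline pair, then
`Per_{G, H_T ΛT} = Per_{H_T ΛT} = Per_{G, ΛT} = Per_{ΛT}` and this common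
set is a subgroup of `ℤ^k`. -/
theorem per_sets_eq_and_subgroup
    {k : ℕ} (G : Type) [Group G] [Countable G] (Λ : KGraph k)
    (hRF : Λ.RowFinite) (hSF : Λ.SourceFree)
    (S : SelfSimilarSys k G Λ) (hPF : S.PseudoFree)
    (hfix : ∀ g v, Λ.IsVertex v → S.act g v = v)
    (T : Set Λ.Path) (hT : MaximalTail Λ T)
    (hcyc : ∀ μ g ν, S.IsCyclineTriple (Λ.tailPaths T) μ g ν → g = 1) :
    S.PerTriple (Λ.cornerPaths T (Λ.HSet T)) =
      Λ.PerPair (Λ.cornerPaths T (Λ.HSet T)) ∧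
    Λ.PerPair (Λ.cornerPaths T (Λ.HSet T)) = S.PerTriple (Λ.tailPaths T) ∧
    S.PerTriple (Λ.tailPaths T) = Λ.PerPair (Λ.tailPaths T) ∧
    ∃ A : AddSubgroup (Fin k → ℤ),
      (A : Set (Fin k → ℤ)) = Λ.PerPair (Λ.tailPaths T) := by
  refine ⟨SSK.perTriple_eq_perPair_corner S hT hcyc, ?_,
    SSK.perTriple_eq_perPair_tail S hT hcyc, ⟨SSK.perSubgroup hT, rfl⟩⟩
  rw [SSK.perPair_corner_eq_tail hT, SSK.perTriple_eq_perPair_tail S hT hcyc]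
end

section
/- Let Λ be a row-finite source-free k-graph, let T₀ and T be maximal tails of Λ, and let H be a nonempty subset of T₀ that is hereditary in ΛT₀ (i.e., v ∈ H and μ ∈ vΛT₀ imply s(μ) ∈ H) and such that HΛT₀ is strongly connected (i.e., for all u, w ∈ H, uΛw ∩ ΛT₀ ≠ ∅). If H ∩ T ≠ ∅, then T₀ ⊂ T. -/
/-- Let `T₀, T` be maximal tails of a row-finite source-free `k`-graph `Λ`
and let `H ⊆ T₀` be nonempty, hereditary in `ΛT₀`, with `H ΛT₀` strongly
connected.  If `H ∩ T ≠ ∅` then `T₀ ⊆ T`. -/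
theorem tail_subset_of_hereditary_meets
    {k : ℕ} (Λ : KGraph k) (hRF : Λ.RowFinite) (hSF : Λ.SourceFree)
    (T₀ T : Set Λ.Path) (hT₀ : MaximalTail Λ T₀) (hT : MaximalTail Λ T)
    (H : Set Λ.Path) (hHsub : H ⊆ T₀) (hHne : H.Nonempty)
    (hher : ∀ v ∈ H, ∀ μ, Λ.r μ = v → Λ.s μ ∈ T₀ → Λ.s μ ∈ H)
    (hsc : ∀ u ∈ H, ∀ w ∈ H, ∃ μ, Λ.r μ = u ∧ Λ.s μ = w)
    (hmeet : (H ∩ T).Nonempty) :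
    T₀ ⊆ T := by
  intro v hv
  obtain ⟨u, huH, huT⟩ := hmeet
  obtain ⟨w, hwT₀, ⟨μ, hrμ, hsμ⟩, ⟨ν, hrν, hsν⟩⟩ :=
    hT₀.directed v hv u (hHsub huH)
  have hwH : w ∈ H := by
    have := hher u huH ν hrν (hsν ▸ hwT₀)
    rwa [hsν] at this
  obtain ⟨ξ, hrξ, hsξ⟩ := hsc w hwH u huH
  have hwT : w ∈ T := hT.backward_closed w (hT₀.vertex w hwT₀) u huT ⟨ξ, hrξ, hsξ⟩
  exact hT.backward_closed v (hT₀.vertex v hv) w hwT ⟨μ, hrμ, hsμ⟩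
end

section
/- Let Λ be a row-finite source-free k-graph, let T₀ and T be maximal tails of Λ with T₀ ⊂ T and T₀ ≠ T, and let H be a nonempty subset of T that is hereditary in ΛT and such that HΛT is strongly connected (i.e., for all u, w ∈ H, uΛw ∩ ΛT ≠ ∅). Then H ∩ T₀ = ∅. -/
/-- Let `T₀ ⊊ T` be maximal tails of a row-finite source-free `k`-graph `Λ`
and let `H ⊆ T` be nonempty, hereditary in `ΛT`, with `H ΛT` strongly
connected.  Then `H ∩ T₀ = ∅`. -/
theorem hereditary_disjoint_of_proper_tail
    {k : ℕ} (Λ : KGraph k) (hRF : Λ.RowFinite) (hSF : Λ.SourceFree)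
    (T₀ T : Set Λ.Path) (hT₀ : MaximalTail Λ T₀) (hT : MaximalTail Λ T)
    (hsub : T₀ ⊆ T) (hne : T₀ ≠ T)
    (H : Set Λ.Path) (hHsub : H ⊆ T) (hHne : H.Nonempty)
    (hher : ∀ v ∈ H, ∀ μ, Λ.r μ = v → Λ.s μ ∈ T → Λ.s μ ∈ H)
    (hsc : ∀ u ∈ H, ∀ w ∈ H, ∃ μ, Λ.r μ = u ∧ Λ.s μ = w) :
    H ∩ T₀ = ∅ := by
  ext x
  simp only [Set.mem_inter_iff, Set.mem_empty_iff_false, iff_false, not_and]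
  intro hxH hxT0
  apply hne
  apply Set.Subset.antisymm hsub
  intro u huT
  -- directedness of T at u and x
  obtain ⟨w, hwT, ⟨μ, hμr, hμs⟩, ⟨ν, hνr, hνs⟩⟩ :=
    hT.directed u huT x (hsub hxT0)
  -- w ∈ H by heredity (path ν from x to w)
  have hwH : w ∈ H := by
    have := hher x hxH ν hνr (by rw [hνs]; exact hwT)
    rwa [hνs] at this
  -- strong connectivity: path from w to x
  obtain ⟨ξ, hξr, hξs⟩ := hsc w hwH x hxH
  -- w ∈ T₀ by backward closedness
  have hwT0 : w ∈ T₀ :=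
    hT₀.backward_closed w (hT.vertex w hwT) x hxT0 ⟨ξ, hξr, hξs⟩
  -- u ∈ T₀ by backward closedness (path μ from u to w)
  exact hT₀.backward_closed u (hT.vertex u huT) w hwT0 ⟨μ, hμr, hμs⟩
end

section
/- Let (G,Λ) be a pseudo free self-similar k-graph such that g·v = v for all g ∈ G and v ∈ Λ^0, let T be a maximal tail of Λ such that every cycline triple of (G, ΛT) is a cycline pair of (G, ΛT), let x be a cofinal infinite path of ΛT, and let f̃ : ℤ^k → 𝕋 be a group homomorphism. Then the family of operators {S_μ : μ ∈ ΛT} ∪ {U_g : g ∈ G} on ℓ²([x]) acts irreducibly: every bounded operator on ℓ²([x]) commuting with all S_μ and all U_g is a scalar multiple of the identity. -/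
open scoped Classical

/-- The class `[x]`, as an index type. -/
def ClsIdx {k : ℕ} {G : Type} [Group G] [Countable G] {Λ : KGraph k}
    (S : SelfSimilarSys k G Λ) (T : Set Λ.Path) (x : InfPath Λ) : Type :=
  {y : InfPath Λ // S.ClassMem T x y}

/-- The Hilbert space `ℓ²([x])`. -/
noncomputable abbrev ClsH {k : ℕ} {G : Type} [Group G] [Countable G] {Λ : KGraph k}
    (S : SelfSimilarSys k G Λ) (T : Set Λ.Path) (x : InfPath Λ) : Type :=
  lp (fun _ : ClsIdx S T x => ℂ) 2

/-- The basis vector `δ_y` of `ℓ²([x])`. -/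
noncomputable def delta {k : ℕ} {G : Type} [Group G] [Countable G] {Λ : KGraph k}
    (S : SelfSimilarSys k G Λ) (T : Set Λ.Path) (x : InfPath Λ)
    (y : ClsIdx S T x) : ClsH S T x :=
  lp.single 2 y (1 : ℂ)

section Aux

variable {k : ℕ} {Λ : KGraph k}

/-- Uniqueness part of the factorization property, in a convenient form. -/
theorem KGraph.factor_unique (Λ : KGraph k) {α β α' β' : Λ.Path}
    (h1 : Λ.s α = Λ.r β) (h2 : Λ.s α' = Λ.r β')
    (hd1 : Λ.d α = Λ.d α') (hd2 : Λ.d β = Λ.d β')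
    (hc : Λ.comp α β = Λ.comp α' β') : α = α' ∧ β = β' := by
  obtain ⟨ab, -, hu⟩ := Λ.factor (Λ.comp α β) (Λ.d α) (Λ.d β) (Λ.d_comp α β h1)
  have e1 : (α, β) = ab := hu (α, β) ⟨h1, rfl, rfl, rfl⟩
  have e2 : (α', β') = ab := hu (α', β') ⟨h2, hd1.symm, hd2.symm, hc.symm⟩
  exact ⟨congrArg Prod.fst (e1.trans e2.symm), congrArg Prod.snd (e1.trans e2.symm)⟩

/-- An infinite path is determined by its segments based at `0`. -/
theorem InfPath.ext_zero {y z : InfPath Λ} (h : ∀ n, y.val 0 n = z.val 0 n) : y = z := by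
  have key : ∀ p n, y.val p n = z.val p n := by
    intro p n
    have hy : Λ.comp (y.val 0 p) (y.val p n) = y.val 0 (p + n) := by
      have := y.comp_val 0 p n; rwa [zero_add] at this
    have hz : Λ.comp (z.val 0 p) (z.val p n) = z.val 0 (p + n) := by
      have := z.comp_val 0 p n; rwa [zero_add] at this
    have hsr : Λ.s (y.val 0 p) = Λ.r (y.val p n) := by
      rw [y.s_val, y.r_val, zero_add]
    have hsr' : Λ.s (z.val 0 p) = Λ.r (z.val p n) := by
      rw [z.s_val, z.r_val, zero_add]
    exact (Λ.factor_unique hsr hsr' (by rw [y.d_val, z.d_val]) (by rw [y.d_val, z.d_val])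
      (by rw [hy, hz, h])).2
  cases y; cases z
  simp only [InfPath.mk.injEq]
  funext p n
  exact key p n

/-- The initial segment of an extension is the prepended path. -/
theorem KGraph.ext_head {μ : Λ.Path} {u w : InfPath Λ} (h : Λ.IsExtension μ u w) :
    w.val 0 (Λ.d μ) = μ := by
  have h2 := h.2 0
  rw [add_zero] at h2
  rw [h2, ← h.1, Λ.comp_id]

/-- An extension `μ u` is unique. -/
theorem KGraph.ext_unique_right {μ : Λ.Path} {u w w' : InfPath Λ}
    (h : Λ.IsExtension μ u w) (h' : Λ.IsExtension μ u w') : w = w' := by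
  apply InfPath.ext_zero
  intro n
  have e : w.val 0 (Λ.d μ + n) = w'.val 0 (Λ.d μ + n) := by
    rw [h.2 n, h'.2 n]
  have hy : Λ.comp (w.val 0 n) (w.val n (Λ.d μ)) = w.val 0 (n + Λ.d μ) := by
    have := w.comp_val 0 n (Λ.d μ); rwa [zero_add] at this
  have hz : Λ.comp (w'.val 0 n) (w'.val n (Λ.d μ)) = w'.val 0 (n + Λ.d μ) := by
    have := w'.comp_val 0 n (Λ.d μ); rwa [zero_add] at this
  have hsr : Λ.s (w.val 0 n) = Λ.r (w.val n (Λ.d μ)) := by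
    rw [w.s_val, w.r_val, zero_add]
  have hsr' : Λ.s (w'.val 0 n) = Λ.r (w'.val n (Λ.d μ)) := by
    rw [w'.s_val, w'.r_val, zero_add]
  refine (Λ.factor_unique hsr hsr' (by rw [w.d_val, w'.d_val]) (by rw [w.d_val, w'.d_val])
    ?_).1
  rw [hy, hz, add_comm n (Λ.d μ), e]

/-- A path `w` is the extension of at most one path by `μ`. -/
theorem KGraph.ext_unique_left {μ : Λ.Path} {u z w : InfPath Λ}
    (h : Λ.IsExtension μ u w) (h' : Λ.IsExtension μ z w) : u = z := by
  apply InfPath.ext_zero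
  intro n
  have e : Λ.comp μ (u.val 0 n) = Λ.comp μ (z.val 0 n) := (h.2 n).symm.trans (h'.2 n)
  have hsr : Λ.s μ = Λ.r (u.val 0 n) := by rw [u.r_val]; exact h.1
  have hsr' : Λ.s μ = Λ.r (z.val 0 n) := by rw [z.r_val]; exact h'.1
  exact (Λ.factor_unique hsr hsr' rfl (by rw [u.d_val, z.d_val]) e).2

/-- Every infinite path is the extension of its shift by its initial segment. -/
theorem KGraph.self_ext (y : InfPath Λ) (n : Fin k → ℕ) :
    Λ.IsExtension (y.val 0 n) (y.shift n) y := by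
  constructor
  · show Λ.s (y.val 0 n) = y.val (0 + n) 0
    rw [y.s_val]
  · intro m
    show y.val 0 (Λ.d (y.val 0 n) + m) = Λ.comp (y.val 0 n) (y.val (0 + n) m)
    rw [y.d_val, zero_add]
    have h2 := y.comp_val 0 n m
    rw [zero_add] at h2
    exact h2.symm

variable {G : Type} [Group G] [Countable G] {S : SelfSimilarSys k G Λ}

theorem SelfSimilarSys.isGAct_inv {g : G} {u z : InfPath Λ} (h : S.IsGAct g u z) :
    S.IsGAct g⁻¹ z u := by
  intro n
  rw [h n, ← S.act_mul, inv_mul_cancel, S.act_one]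

theorem SelfSimilarSys.isGAct_unique {g : G} {u z z' : InfPath Λ}
    (h : S.IsGAct g u z) (h' : S.IsGAct g u z') : z = z' :=
  InfPath.ext_zero fun n => (h n).trans (h' n).symm

theorem SelfSimilarSys.isGAct_shift (hfix : ∀ g v, Λ.IsVertex v → S.act g v = v)
    {g : G} {u z : InfPath Λ} (h : S.IsGAct g u z) (m : Fin k → ℕ) :
    S.IsGAct (S.res g (u.val 0 m)) (u.shift m) (z.shift m) := by
  intro n
  show z.val (0 + m) n = S.act _ (u.val (0 + m) n)
  rw [zero_add]
  have hz : Λ.comp (z.val 0 m) (z.val m n) = z.val 0 (m + n) := by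
    have := z.comp_val 0 m n; rwa [zero_add] at this
  have hu : Λ.comp (u.val 0 m) (u.val m n) = u.val 0 (m + n) := by
    have := u.comp_val 0 m n; rwa [zero_add] at this
  have hact : Λ.comp (S.act g (u.val 0 m)) (S.act (S.res g (u.val 0 m)) (u.val m n))
      = z.val 0 (m + n) := by
    rw [← S.act_comp, hu, ← h (m + n)]
    rw [u.s_val, u.r_val, zero_add]
  have h1 : Λ.s (z.val 0 m) = Λ.r (z.val m n) := by rw [z.s_val, z.r_val, zero_add]
  have h2 : Λ.s (S.act g (u.val 0 m)) = Λ.r (S.act (S.res g (u.val 0 m)) (u.val m n)) := by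
    rw [S.s_act, S.r_act, u.s_val, u.r_val, zero_add,
      hfix g (u.val m 0) (u.d_val m 0),
      hfix (S.res g (u.val 0 m)) (u.val m 0) (u.d_val m 0)]
  have key := Λ.factor_unique h1 h2 (by rw [z.d_val, S.d_act, u.d_val])
    (by rw [z.d_val, S.d_act, u.d_val]) (hz.trans hact.symm)
  exact key.2

theorem SelfSimilarSys.classMem_shift (hfix : ∀ g v, Λ.IsVertex v → S.act g v = v)
    {T : Set Λ.Path} {x y : InfPath Λ}
    (h : S.ClassMem T x y) (m : Fin k → ℕ) : S.ClassMem T x (y.shift m) := by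
  obtain ⟨hsub, p, q, g, hg⟩ := h
  refine ⟨fun a n => hsub (a + m) n, p + m, q, S.res g ((y.shift q).val 0 m), ?_⟩
  have h2 := S.isGAct_shift hfix hg m
  intro n
  have h3 := h2 n
  show x.val (0 + (p + m)) n = S.act _ (y.val (0 + q + m) n)
  have e1 : (0 : Fin k → ℕ) + (p + m) = 0 + m + p := by ring
  have e2 : (0 : Fin k → ℕ) + q + m = 0 + m + q := by ring
  rw [e1, e2]
  exact h3

theorem SelfSimilarSys.classMem_self {T : Set Λ.Path} {x : InfPath Λ}
    (hx : x.inSub (Λ.tailPaths T)) : S.ClassMem T x x :=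
  ⟨hx, 0, 0, 1, fun n => by rw [S.act_one]⟩

end Aux

section Analysis

variable {k : ℕ} {G : Type} [Group G] [Countable G] {Λ : KGraph k}
  (S : SelfSimilarSys k G Λ) (T : Set Λ.Path) (x : InfPath Λ)

/-- Evaluation at a basis index, as a continuous linear functional on `ℓ²([x])`. -/
noncomputable def evCLM (w : ClsIdx S T x) : ClsH S T x →L[ℂ] ℂ :=
  LinearMap.mkContinuous
    { toFun := fun v => v w
      map_add' := fun a b => congrFun (lp.coeFn_add a b) w
      map_smul' := fun c a => congrFun (lp.coeFn_smul c a) w }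
    1 (fun v => by
      simpa using lp.norm_apply_le_norm (by norm_num) v w)

@[simp] theorem evCLM_apply (w : ClsIdx S T x) (v : ClsH S T x) :
    evCLM S T x w v = v w := rfl

theorem delta_apply (y w : ClsIdx S T x) :
    (delta S T x y) w = if w = y then 1 else 0 := by
  by_cases h : w = y
  · subst h; rw [if_pos rfl]; exact lp.single_apply_self 2 w 1
  · rw [if_neg h]; exact lp.single_apply_ne 2 y 1 h

theorem coeff_formula (B : ClsH S T x →L[ℂ] ClsH S T x) (v : ClsH S T x)
    (w z₀ : ClsIdx S T x) (h : ∀ z, z ≠ z₀ → (B (delta S T x z)) w = 0) :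
    (B v) w = v z₀ * (B (delta S T x z₀)) w := by
  haveI : Fact ((1 : ENNReal) ≤ 2) := ⟨by norm_num⟩
  have h1 : HasSum (fun z : ClsIdx S T x => lp.single 2 z (v z)) v :=
    lp.hasSum_single ENNReal.ofNat_ne_top v
  have h2 := h1.mapL ((evCLM S T x w).comp B)
  have h3 : (fun z : ClsIdx S T x => ((evCLM S T x w).comp B) (lp.single 2 z (v z)))
      = fun z : ClsIdx S T x => v z * (B (delta S T x z)) w := by
    funext z
    have hs : lp.single (E := fun _ : ClsIdx S T x => ℂ) 2 z (v z) = v z • delta S T x z := by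
      rw [delta, ← lp.single_smul]
      norm_num
    rw [hs, ContinuousLinearMap.comp_apply, map_smul, map_smul, smul_eq_mul, evCLM_apply]
  rw [h3] at h2
  have h5 : HasSum (fun z : ClsIdx S T x => v z * (B (delta S T x z)) w)
      (v z₀ * (B (delta S T x z₀)) w) := by
    apply hasSum_single z₀
    intro b hb
    rw [h b hb, mul_zero]
  exact (h2.unique h5)

end Analysis

/-- For a pseudo free self-similar `k`-graph `(G, Λ)` with `g · v = v` for
vertices, a maximal tail `T` such that every cycline triple of `(G, ΛT)` is a
cycline pair, a cofinal infinite path `x` of `ΛT`, and a homomorphism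
`f : ℤ^k → 𝕋`: the family `{S_μ : μ ∈ ΛT} ∪ {U_g : g ∈ G}` acts irreducibly
on `ℓ²([x])`, i.e. any bounded operator commuting with all of them is a
scalar multiple of the identity. -/
theorem representation_is_irreducible
    {k : ℕ} (G : Type) [Group G] [Countable G] (Λ : KGraph k)
    (hRF : Λ.RowFinite) (hSF : Λ.SourceFree)
    (S : SelfSimilarSys k G Λ) (hPF : S.PseudoFree)
    (hfix : ∀ g v, Λ.IsVertex v → S.act g v = v)
    (T : Set Λ.Path) (hT : MaximalTail Λ T)
    (hcyc : ∀ μ g ν, S.IsCyclineTriple (Λ.tailPaths T) μ g ν → g = 1)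
    (x : InfPath Λ) (hx : x.inSub (Λ.tailPaths T))
    (hcof : ∀ v ∈ T, ∃ m : Fin k → ℕ, ∃ μ,
      Λ.r μ = v ∧ Λ.s μ = x.val m 0 ∧ Λ.s μ ∈ T)
    (f : (Fin k → ℤ) → ℂ) (hf0 : f 0 = 1)
    (hfadd : ∀ a b, f (a + b) = f a * f b) (hfnorm : ∀ a, ‖f a‖ = 1)
    -- the operators S_μ and U_g, given by their action on the basis vectors
    (SOp : Λ.Path → (ClsH S T x →L[ℂ] ClsH S T x))
    (UOp : G → (ClsH S T x →L[ℂ] ClsH S T x))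
    (hS : ∀ μ, Λ.s μ ∈ T → ∀ y : ClsIdx S T x,
      (Λ.s μ = y.1.val 0 0 →
        ∃ z : ClsIdx S T x, Λ.IsExtension μ y.1 z.1 ∧
          SOp μ (delta S T x y) = f (fun i => (Λ.d μ i : ℤ)) • delta S T x z) ∧
      (Λ.s μ ≠ y.1.val 0 0 → SOp μ (delta S T x y) = 0))
    (hU : ∀ (g : G) (y : ClsIdx S T x), ∃ z : ClsIdx S T x,
      S.IsGAct g y.1 z.1 ∧ UOp g (delta S T x y) = delta S T x z) :
    -- irreducibility
    ∀ A : ClsH S T x →L[ℂ] ClsH S T x,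
      (∀ μ, Λ.s μ ∈ T → A * SOp μ = SOp μ * A) →
      (∀ g : G, A * UOp g = UOp g * A) →
      ∃ c : ℂ, A = c • (1 : ClsH S T x →L[ℂ] ClsH S T x) := by
  intro A hAS hAU
  classical
  have fnz : ∀ a, f a ≠ 0 := by
    intro a ha
    have h := hfnorm a
    rw [ha, norm_zero] at h
    norm_num at h
  have commS : ∀ μ, Λ.s μ ∈ T → ∀ v, A (SOp μ v) = SOp μ (A v) := by
    intro μ hμ v
    have h := ContinuousLinearMap.ext_iff.mp (hAS μ hμ) v
    rwa [ContinuousLinearMap.mul_apply, ContinuousLinearMap.mul_apply] at h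
  have commU : ∀ (g : G) (v), A (UOp g v) = UOp g (A v) := by
    intro g v
    have h := ContinuousLinearMap.ext_iff.mp (hAU g) v
    rwa [ContinuousLinearMap.mul_apply, ContinuousLinearMap.mul_apply] at h
  have SD : ∀ (y : ClsIdx S T x) (n : Fin k → ℕ) (y' : ClsIdx S T x),
      y'.1 = y.1.shift n →
      SOp (y.1.val 0 n) (delta S T x y') =
        f (fun i => ((Λ.d (y.1.val 0 n)) i : ℤ)) • delta S T x y := by
    intro y n y' hy'
    have hμT : Λ.s (y.1.val 0 n) ∈ T := y.2.1 0 n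
    have hsμ : Λ.s (y.1.val 0 n) = y'.1.val 0 0 := by
      rw [hy']
      exact y.1.s_val 0 n
    obtain ⟨z, hz1, hz2⟩ := (hS (y.1.val 0 n) hμT y').1 hsμ
    have hz : z = y := by
      apply Subtype.ext
      apply Λ.ext_unique_right hz1
      rw [hy']
      exact Λ.self_ext y.1 n
    rw [hz] at hz2
    exact hz2
  have Adelta : ∀ (y : ClsIdx S T x) (n : Fin k → ℕ) (y' : ClsIdx S T x),
      y'.1 = y.1.shift n →
      A (delta S T x y) =
        (f (fun i => ((Λ.d (y.1.val 0 n)) i : ℤ)))⁻¹ •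
          SOp (y.1.val 0 n) (A (delta S T x y')) := by
    intro y n y' hy'
    have h1 := SD y n y' hy'
    have h2 : delta S T x y = (f (fun i => ((Λ.d (y.1.val 0 n)) i : ℤ)))⁻¹ •
        SOp (y.1.val 0 n) (delta S T x y') := by
      rw [h1, inv_smul_smul₀ (fnz _)]
    rw [h2, map_smul, commS _ (y.2.1 0 n)]
  have offdiag : ∀ z w : ClsIdx S T x, w ≠ z → (A (delta S T x z)) w = 0 := by
    intro z w hw
    have hne : ∃ n, w.1.val 0 n ≠ z.1.val 0 n := by
      by_contra hcon
      push_neg at hcon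
      exact hw (Subtype.ext (InfPath.ext_zero hcon))
    obtain ⟨n, hn⟩ := hne
    have hA := Adelta z n ⟨z.1.shift n, S.classMem_shift hfix z.2 n⟩ rfl
    have hzero : ∀ u : ClsIdx S T x, (SOp (z.1.val 0 n) (delta S T x u)) w = 0 := by
      intro u
      by_cases hcase : Λ.s (z.1.val 0 n) = u.1.val 0 0
      · obtain ⟨e, he1, he2⟩ := (hS (z.1.val 0 n) (z.2.1 0 n) u).1 hcase
        rw [he2]
        have hwe : w ≠ e := by
          intro hbad
          apply hn
          have hh := Λ.ext_head he1
          rw [z.1.d_val 0 n] at hh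
          rw [hbad]
          exact hh
        rw [lp.coeFn_smul, Pi.smul_apply, delta_apply, if_neg hwe, smul_zero]
      · rw [(hS (z.1.val 0 n) (z.2.1 0 n) u).2 hcase]
        simp
    have hcf := coeff_formula S T x (SOp (z.1.val 0 n))
      (A (delta S T x ⟨z.1.shift n, S.classMem_shift hfix z.2 n⟩)) w w
      (fun u _ => hzero u)
    rw [hA, lp.coeFn_smul, Pi.smul_apply, hcf, hzero w, mul_zero, smul_zero]
  have diagS : ∀ (y y' : ClsIdx S T x) (n : Fin k → ℕ), y'.1 = y.1.shift n →
      (A (delta S T x y)) y = (A (delta S T x y')) y' := by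
    intro y y' n hy'
    have hA := Adelta y n y' hy'
    have hzero : ∀ u : ClsIdx S T x, u ≠ y' →
        (SOp (y.1.val 0 n) (delta S T x u)) y = 0 := by
      intro u hu
      by_cases hcase : Λ.s (y.1.val 0 n) = u.1.val 0 0
      · obtain ⟨e, he1, he2⟩ := (hS (y.1.val 0 n) (y.2.1 0 n) u).1 hcase
        rw [he2]
        have hye : y ≠ e := by
          intro hbad
          apply hu
          apply Subtype.ext
          have hself := Λ.self_ext y.1 n
          rw [← hy'] at hself
          rw [← hbad] at he1
          exact Λ.ext_unique_left he1 hself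
        rw [lp.coeFn_smul, Pi.smul_apply, delta_apply, if_neg hye, smul_zero]
      · rw [(hS (y.1.val 0 n) (y.2.1 0 n) u).2 hcase]
        simp
    have hcf := coeff_formula S T x (SOp (y.1.val 0 n)) (A (delta S T x y')) y y' hzero
    have hSd := SD y n y' hy'
    rw [hA, lp.coeFn_smul, Pi.smul_apply, hcf, hSd, lp.coeFn_smul, Pi.smul_apply,
      delta_apply, if_pos rfl]
    simp only [smul_eq_mul, mul_one]
    rw [mul_comm ((A (delta S T x y')) y'), ← mul_assoc, inv_mul_cancel₀ (fnz _), one_mul]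
  have diagU : ∀ (y z : ClsIdx S T x) (g : G), S.IsGAct g y.1 z.1 →
      (A (delta S T x z)) z = (A (delta S T x y)) y := by
    intro y z g hg
    obtain ⟨z', h1, h2⟩ := hU g y
    have hz' : z' = z := Subtype.ext (S.isGAct_unique h1 hg)
    rw [hz'] at h2
    have hA : A (delta S T x z) = UOp g (A (delta S T x y)) := by
      rw [← h2, commU]
    have hzero : ∀ u : ClsIdx S T x, u ≠ y → (UOp g (delta S T x u)) z = 0 := by
      intro u hu
      obtain ⟨e, he1, he2⟩ := hU g u
      rw [he2, delta_apply, if_neg]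
      intro hbad
      apply hu
      apply Subtype.ext
      rw [← hbad] at he1
      exact S.isGAct_unique (S.isGAct_inv he1) (S.isGAct_inv hg)
    have hcf := coeff_formula S T x (UOp g) (A (delta S T x y)) z y hzero
    rw [hA, hcf, h2, delta_apply, if_pos rfl, mul_one]
  have diagC : ∀ y : ClsIdx S T x,
      (A (delta S T x y)) y =
        (A (delta S T x ⟨x, S.classMem_self hx⟩)) ⟨x, S.classMem_self hx⟩ := by
    intro y
    obtain ⟨p, q, g, hg⟩ := y.2.2
    have e1 := diagS y ⟨y.1.shift q, S.classMem_shift hfix y.2 q⟩ q rfl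
    have e2 := diagU ⟨y.1.shift q, S.classMem_shift hfix y.2 q⟩
      ⟨x.shift p, S.classMem_shift hfix (S.classMem_self hx) p⟩ g hg
    have e3 := diagS ⟨x, S.classMem_self hx⟩
      ⟨x.shift p, S.classMem_shift hfix (S.classMem_self hx) p⟩ p rfl
    rw [e1, ← e2, ← e3]
  refine ⟨(A (delta S T x ⟨x, S.classMem_self hx⟩)) ⟨x, S.classMem_self hx⟩, ?_⟩
  apply ContinuousLinearMap.ext
  intro v
  apply lp.ext
  funext w
  have hcf := coeff_formula S T x A v w w (fun z hz => offdiag z w (Ne.symm hz))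
  show (A v) w = _
  rw [hcf, diagC w]
  simp only [ContinuousLinearMap.smul_apply, ContinuousLinearMap.one_apply,
    lp.coeFn_smul, Pi.smul_apply, smul_eq_mul]
  ring
end

section
/- Let Λ be a row-finite source-free 1-graph and let T be a maximal tail of Λ with Per_{ΛT} ≠ 0. Then ΛT contains a cycle without entrances, and the vertex set of this cycle equals H_T; in particular H_T ΛT is strongly connected (for all u, w ∈ H_T, uΛw ∩ ΛT ≠ ∅). -/
namespace CWE1

open KGraph

variable {Λ : KGraph 1}

/-- constant function `Fin 1 → ℕ` -/
def fn (n : ℕ) : Fin 1 → ℕ := fun _ => n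

@[simp] lemma fn_apply (a : ℕ) (i : Fin 1) : fn a i = a := rfl

lemma ext0 {f g : Fin 1 → ℕ} (h : f 0 = g 0) : f = g :=
  funext fun i => by rw [Fin.eq_zero i]; exact h

lemma eq_fn (m : Fin 1 → ℕ) : m = fn (m 0) := ext0 rfl

lemma fn_add (a b : ℕ) : fn a + fn b = fn (a + b) := rfl

lemma fn_zero : fn 0 = (0 : Fin 1 → ℕ) := rfl

lemma s_eq_self {v : Λ.Path} (h : Λ.d v = 0) : Λ.s v = v := by
  have hv := Λ.eq_r_of_d_eq_zero v h
  rw [hv, Λ.s_r, ← hv]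

lemma eq_of_comp_eq {a b a' b' : Λ.Path} (h1 : Λ.s a = Λ.r b) (h2 : Λ.s a' = Λ.r b')
    (hd : Λ.d a = Λ.d a') (hc : Λ.comp a b = Λ.comp a' b') : a = a' ∧ b = b' := by
  have hab := Λ.d_comp a b h1
  have hab' := Λ.d_comp a' b' h2
  rw [hc, hab'] at hab
  have hdb : Λ.d b = Λ.d b' := by
    funext i
    have e1 := congrFun hab i
    have e2 := congrFun hd i
    simp only [Pi.add_apply] at e1
    omega
  obtain ⟨wpair, _, hu⟩ := Λ.factor (Λ.comp a b) (Λ.d a) (Λ.d b) (Λ.d_comp a b h1)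
  have e1 := hu (a, b) ⟨h1, rfl, rfl, rfl⟩
  have e2 := hu (a', b') ⟨h2, hd.symm, hdb.symm, hc.symm⟩
  have e3 : (a, b) = (a', b') := e1.trans e2.symm
  exact ⟨congrArg Prod.fst e3, congrArg Prod.snd e3⟩

/-- A chain of composable paths with sources in `T`. -/
structure Chain (Λ : KGraph 1) (T : Set Λ.Path) where
  σ : ℕ → Λ.Path
  d_σ : ∀ n, Λ.d (σ n) = fn n
  mem_σ : ∀ n, Λ.s (σ n) ∈ T
  step : ∀ n, ∃ e, Λ.s (σ n) = Λ.r e ∧ Λ.comp (σ n) e = σ (n + 1)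

namespace Chain

variable {T : Set Λ.Path} (c : Chain Λ T)

lemma exists_seg (a m : ℕ) : ∃ ξ, Λ.s (c.σ a) = Λ.r ξ ∧ Λ.d ξ = fn m ∧
    Λ.comp (c.σ a) ξ = c.σ (a + m) := by
  induction m with
  | zero =>
    exact ⟨Λ.s (c.σ a), (Λ.r_s _).symm, by rw [Λ.d_s]; rfl, by rw [Λ.comp_id]; rfl⟩
  | succ m ih =>
    obtain ⟨ξ, h1, h2, h3⟩ := ih
    obtain ⟨e, he1, he2⟩ := c.step (a + m)
    have hse : Λ.s ξ = Λ.r e := by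
      have h := Λ.s_comp (c.σ a) ξ h1
      rw [h3] at h
      exact h.symm.trans he1
    have hde : Λ.d e = fn 1 := by
      have hd1 := Λ.d_comp (c.σ (a + m)) e he1
      rw [he2, c.d_σ, c.d_σ] at hd1
      funext i
      have := congrFun hd1 i
      simp only [Pi.add_apply] at this
      simp only [fn] at this ⊢
      omega
    refine ⟨Λ.comp ξ e, ?_, ?_, ?_⟩
    · rw [Λ.r_comp ξ e hse, ← h1]
    · rw [Λ.d_comp ξ e hse, h2, hde, fn_add]
    · rw [← Λ.comp_assoc _ _ _ h1 hse, h3, he2]; rfl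

noncomputable def seg (a m : ℕ) : Λ.Path := (c.exists_seg a m).choose

lemma seg_spec (a m : ℕ) : Λ.s (c.σ a) = Λ.r (c.seg a m) ∧ Λ.d (c.seg a m) = fn m ∧
    Λ.comp (c.σ a) (c.seg a m) = c.σ (a + m) := (c.exists_seg a m).choose_spec

lemma seg_r (a m : ℕ) : Λ.r (c.seg a m) = Λ.s (c.σ a) := (c.seg_spec a m).1.symm

lemma seg_d (a m : ℕ) : Λ.d (c.seg a m) = fn m := (c.seg_spec a m).2.1

lemma seg_comp_σ (a m : ℕ) : Λ.comp (c.σ a) (c.seg a m) = c.σ (a + m) := (c.seg_spec a m).2.2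

lemma seg_s (a m : ℕ) : Λ.s (c.seg a m) = Λ.s (c.σ (a + m)) := by
  rw [← c.seg_comp_σ a m, Λ.s_comp _ _ (c.seg_spec a m).1]

lemma seg_zero (a : ℕ) : c.seg a 0 = Λ.s (c.σ a) := by
  have h0 : Λ.d (c.seg a 0) = 0 := by rw [c.seg_d]; rfl
  have := Λ.eq_r_of_d_eq_zero _ h0
  rw [this, c.seg_r]

lemma seg_comp (a m n : ℕ) :
    Λ.comp (c.seg a m) (c.seg (a + m) n) = c.seg a (m + n) := by
  have h1 : Λ.s (c.seg a m) = Λ.r (c.seg (a + m) n) := by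
    rw [c.seg_s, c.seg_r]
  have hc : Λ.comp (c.σ a) (Λ.comp (c.seg a m) (c.seg (a + m) n)) =
      Λ.comp (c.σ a) (c.seg a (m + n)) := by
    rw [← Λ.comp_assoc _ _ _ (c.seg_spec a m).1 h1, c.seg_comp_σ, c.seg_comp_σ,
      c.seg_comp_σ, add_assoc]
  have h2 : Λ.s (c.σ a) = Λ.r (Λ.comp (c.seg a m) (c.seg (a + m) n)) := by
    rw [Λ.r_comp _ _ h1, c.seg_r]
  exact (eq_of_comp_eq h2 (c.seg_spec a (m + n)).1 rfl hc).2

lemma seg_zero_left (m : ℕ) : c.seg 0 m = c.σ m := by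
  have h0 : Λ.d (c.σ 0) = 0 := by rw [c.d_σ]; rfl
  have hr : Λ.r (c.seg 0 m) = c.σ 0 := by rw [c.seg_r, s_eq_self h0]
  have h := c.seg_comp_σ 0 m
  rw [zero_add] at h
  rw [← h]
  conv_rhs => rw [← hr]
  rw [Λ.id_comp]

noncomputable def toInf : InfPath Λ where
  val p n := c.seg (p 0) (n 0)
  d_val p n := by
    show Λ.d (c.seg (p 0) (n 0)) = n
    rw [c.seg_d]; exact (eq_fn n).symm
  r_val p n := by
    show Λ.r (c.seg (p 0) (n 0)) = c.seg (p 0) 0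
    rw [c.seg_r, ← c.seg_zero]
  s_val p n := by
    show Λ.s (c.seg (p 0) (n 0)) = c.seg (p 0 + n 0) 0
    rw [c.seg_s, ← c.seg_zero]
  comp_val p m n := by
    show Λ.comp (c.seg (p 0) (m 0)) (c.seg (p 0 + m 0) (n 0)) = c.seg (p 0) (m 0 + n 0)
    exact c.seg_comp (p 0) (m 0) (n 0)

lemma toInf_inSub : c.toInf.inSub (Λ.tailPaths T) := fun p n => by
  show Λ.s (c.seg (p 0) (n 0)) ∈ T
  rw [c.seg_s]
  exact c.mem_σ _

lemma toInf_val0 (n : Fin 1 → ℕ) : c.toInf.val 0 n = c.σ (n 0) := by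
  show c.seg 0 (n 0) = c.σ (n 0)
  rw [seg_zero_left]

end Chain

end CWE1
namespace CWE1

open KGraph
open scoped Classical

variable {Λ : KGraph 1} {T : Set Λ.Path}

/-- choice of an edge in `ΛT` out of a vertex of `T` -/
noncomputable def nxt (hT : MaximalTail Λ T) (w : Λ.Path) : Λ.Path :=
  if h : w ∈ T then (hT.reaches w h (fn 1)).choose else w

lemma nxt_spec (hT : MaximalTail Λ T) {w : Λ.Path} (h : w ∈ T) :
    Λ.r (nxt hT w) = w ∧ Λ.d (nxt hT w) = fn 1 ∧ Λ.s (nxt hT w) ∈ T := by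
  unfold nxt
  rw [dif_pos h]
  exact (hT.reaches w h (fn 1)).choose_spec

noncomputable def seqFrom (hT : MaximalTail Λ T) (v : Λ.Path) : ℕ → Λ.Path
  | 0 => v
  | n + 1 => Λ.comp (seqFrom hT v n) (nxt hT (Λ.s (seqFrom hT v n)))

lemma seqFrom_spec (hT : MaximalTail Λ T) {v : Λ.Path} (hv : v ∈ T) (n : ℕ) :
    Λ.d (seqFrom hT v n) = fn n ∧ Λ.s (seqFrom hT v n) ∈ T := by
  induction n with
  | zero =>
    constructor
    · show Λ.d v = fn 0
      exact hT.vertex v hv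
    · show Λ.s v ∈ T
      rw [s_eq_self (hT.vertex v hv)]
      exact hv
  | succ n ih =>
    obtain ⟨h1, h2, h3⟩ := nxt_spec hT ih.2
    constructor
    · show Λ.d (Λ.comp _ _) = _
      rw [Λ.d_comp _ _ h1.symm, ih.1, h2, fn_add]
    · show Λ.s (Λ.comp _ _) ∈ T
      rw [Λ.s_comp _ _ h1.symm]
      exact h3

noncomputable def chainFrom (hT : MaximalTail Λ T) {v : Λ.Path} (hv : v ∈ T) : Chain Λ T where
  σ := seqFrom hT v
  d_σ n := (seqFrom_spec hT hv n).1
  mem_σ n := (seqFrom_spec hT hv n).2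
  step n := ⟨nxt hT (Λ.s (seqFrom hT v n)), (nxt_spec hT (seqFrom_spec hT hv n).2).1.symm, rfl⟩

/-- the canonical infinite path of `ΛT` from a vertex of `T` -/
noncomputable def XP (hT : MaximalTail Λ T) {v : Λ.Path} (hv : v ∈ T) : InfPath Λ :=
  (chainFrom hT hv).toInf

lemma XP_inSub (hT : MaximalTail Λ T) {v : Λ.Path} (hv : v ∈ T) :
    (XP hT hv).inSub (Λ.tailPaths T) := (chainFrom hT hv).toInf_inSub

lemma XP_zero (hT : MaximalTail Λ T) {v : Λ.Path} (hv : v ∈ T) :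
    (XP hT hv).val 0 0 = v := by
  show (chainFrom hT hv).toInf.val 0 0 = v
  rw [(chainFrom hT hv).toInf_val0]
  rfl

/-- splitting a path at an intermediate degree -/
noncomputable def splitAt (ξ : Λ.Path) (n : ℕ) : Λ.Path × Λ.Path :=
  if h : Λ.d ξ = fn n + fn (Λ.d ξ 0 - n) then (Λ.factor ξ _ _ h).choose else (ξ, ξ)

lemma splitAt_spec (ξ : Λ.Path) {n : ℕ} (hn : n ≤ Λ.d ξ 0) :
    Λ.s (splitAt ξ n).1 = Λ.r (splitAt ξ n).2 ∧ Λ.d (splitAt ξ n).1 = fn n ∧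
    Λ.d (splitAt ξ n).2 = fn (Λ.d ξ 0 - n) ∧ Λ.comp (splitAt ξ n).1 (splitAt ξ n).2 = ξ := by
  have h : Λ.d ξ = fn n + fn (Λ.d ξ 0 - n) := by
    rw [fn_add]
    apply ext0
    simp only [fn]
    omega
  unfold splitAt
  rw [dif_pos h]
  exact (Λ.factor ξ _ _ h).choose_spec.1

lemma splitAt_zero (ξ : Λ.Path) : (splitAt ξ 0).1 = Λ.r ξ := by
  obtain ⟨h1, h2, h3, h4⟩ := splitAt_spec ξ (Nat.zero_le (Λ.d ξ 0))
  have h0 : Λ.d (splitAt ξ 0).1 = 0 := by rw [h2]; rfl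
  have hv := Λ.eq_r_of_d_eq_zero _ h0
  have hr := Λ.r_comp _ _ h1
  rw [h4] at hr
  exact hv.trans hr.symm

lemma splitAt_last (ξ : Λ.Path) : (splitAt ξ (Λ.d ξ 0)).1 = ξ := by
  obtain ⟨h1, h2, h3, h4⟩ := splitAt_spec ξ (le_refl (Λ.d ξ 0))
  have h0 : Λ.d (splitAt ξ (Λ.d ξ 0)).2 = 0 := by
    rw [h3]
    show fn (Λ.d ξ 0 - Λ.d ξ 0) = 0
    rw [Nat.sub_self]
    rfl
  have hv := Λ.eq_r_of_d_eq_zero _ h0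
  rw [hv, ← h1, Λ.comp_id] at h4
  exact h4

lemma inSub_vertex_mem {x : InfPath Λ} (hx : x.inSub (Λ.tailPaths T)) (m : Fin 1 → ℕ) :
    x.val m 0 ∈ T := by
  have h : Λ.s (x.val m 0) ∈ T := hx m 0
  rwa [s_eq_self (x.d_val m 0)] at h

lemma inSub_s_mem {x : InfPath Λ} (hx : x.inSub (Λ.tailPaths T)) (p n : Fin 1 → ℕ) :
    Λ.s (x.val p n) ∈ T := hx p n

section Ext

variable (hT : MaximalTail Λ T) (ξ : Λ.Path) (x : InfPath Λ)
  (hx : x.inSub (Λ.tailPaths T)) (hx0 : x.val 0 0 = Λ.s ξ)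

/-- the chain `ξ x` prepending a finite path to an infinite path -/
noncomputable def extChain (hT : MaximalTail Λ T) (ξ : Λ.Path) (x : InfPath Λ)
    (hx : x.inSub (Λ.tailPaths T)) (hx0 : x.val 0 0 = Λ.s ξ) : Chain Λ T where
  σ n := if n ≤ Λ.d ξ 0 then (splitAt ξ n).1 else Λ.comp ξ (x.val 0 (fn (n - Λ.d ξ 0)))
  d_σ n := by
    by_cases h : n ≤ Λ.d ξ 0
    · rw [if_pos h]
      exact (splitAt_spec ξ h).2.1
    · rw [if_neg h]
      have hr : Λ.s ξ = Λ.r (x.val 0 (fn (n - Λ.d ξ 0))) := by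
        rw [x.r_val, hx0]
      rw [Λ.d_comp _ _ hr, x.d_val, eq_fn (Λ.d ξ), fn_add]
      apply ext0
      simp only [fn]
      omega
  mem_σ n := by
    have hsT : Λ.s ξ ∈ T := by
      rw [← hx0]
      exact inSub_vertex_mem hx 0
    by_cases h : n ≤ Λ.d ξ 0
    · rw [if_pos h]
      obtain ⟨h1, h2, h3, h4⟩ := splitAt_spec ξ h
      rw [h1]
      have hvert : Λ.IsVertex (Λ.r (splitAt ξ n).2) := Λ.d_r _
      apply hT.backward_closed _ hvert (Λ.s ξ) hsT
      refine ⟨(splitAt ξ n).2, rfl, ?_⟩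
      rw [← Λ.s_comp _ _ h1, h4]
    · rw [if_neg h]
      have hr : Λ.s ξ = Λ.r (x.val 0 (fn (n - Λ.d ξ 0))) := by
        rw [x.r_val, hx0]
      rw [Λ.s_comp _ _ hr]
      exact hx 0 _
  step n := by
    by_cases h : n + 1 ≤ Λ.d ξ 0
    · have hn : n ≤ Λ.d ξ 0 := by omega
      rw [if_pos h, if_pos hn]
      obtain ⟨g1, g2, g3, g4⟩ := splitAt_spec ξ h
      obtain ⟨h1, h2, h3, h4⟩ := splitAt_spec ξ hn
      have hfac : Λ.d (splitAt ξ (n + 1)).1 = fn n + fn 1 := by rw [g2, fn_add]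
      obtain ⟨⟨u, e⟩, ⟨m1, m2, m3, m4⟩, _⟩ := Λ.factor _ _ _ hfac
      have hse : Λ.s e = Λ.r (splitAt ξ (n + 1)).2 := by
        rw [← g1, ← m4, Λ.s_comp _ _ m1]
      have hcomp : Λ.comp (splitAt ξ n).1 (splitAt ξ n).2 =
          Λ.comp u (Λ.comp e (splitAt ξ (n + 1)).2) := by
        rw [← Λ.comp_assoc _ _ _ m1 hse, m4, g4, h4]
      have h2' : Λ.s u = Λ.r (Λ.comp e (splitAt ξ (n + 1)).2) := by
        rw [Λ.r_comp _ _ hse]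
        exact m1
      have := eq_of_comp_eq h1 h2' (by rw [h2, m2]) hcomp
      refine ⟨e, ?_, ?_⟩
      · rw [this.1]; exact m1
      · rw [this.1]; exact m4
    · by_cases hn : n ≤ Λ.d ξ 0
      · -- n = d ξ 0
        have hL : n = Λ.d ξ 0 := by omega
        rw [if_pos hn, if_neg h]
        subst hL
        rw [splitAt_last]
        refine ⟨x.val 0 (fn 1), by rw [x.r_val, hx0], ?_⟩
        rw [show Λ.d ξ 0 + 1 - Λ.d ξ 0 = 1 from by omega]
      · rw [if_neg h, if_neg hn]
        set L := Λ.d ξ 0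
        have hr1 : Λ.s ξ = Λ.r (x.val 0 (fn (n - L))) := by rw [x.r_val, hx0]
        have hr2 : Λ.s (x.val 0 (fn (n - L))) = Λ.r (x.val (fn (n - L)) (fn 1)) := by
          rw [x.s_val, x.r_val, zero_add]
      
        refine ⟨x.val (fn (n - L)) (fn 1), ?_, ?_⟩
        · rw [Λ.s_comp _ _ hr1]
          exact hr2
        · rw [Λ.comp_assoc _ _ _ hr1 hr2]
          have hcv := x.comp_val 0 (fn (n - L)) (fn 1)
          rw [zero_add] at hcv
          rw [hcv]
          congr 2
          rw [fn_add]
          apply ext0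
          simp only [fn]
          omega

/-- the infinite path `ξ x` -/
noncomputable def extInf : InfPath Λ := (extChain hT ξ x hx hx0).toInf

lemma extInf_inSub : (extInf hT ξ x hx hx0).inSub (Λ.tailPaths T) :=
  (extChain hT ξ x hx hx0).toInf_inSub

lemma extInf_zero : (extInf hT ξ x hx hx0).val 0 0 = Λ.r ξ := by
  show (extChain hT ξ x hx hx0).toInf.val 0 0 = Λ.r ξ
  rw [Chain.toInf_val0]
  show (if 0 ≤ Λ.d ξ 0 then (splitAt ξ 0).1 else Λ.comp ξ (x.val 0 (fn (0 - Λ.d ξ 0)))) = Λ.r ξ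
  rw [if_pos (Nat.zero_le _), splitAt_zero]

lemma extInf_ext : Λ.IsExtension ξ x (extInf hT ξ x hx hx0) := by
  refine ⟨hx0.symm, fun n => ?_⟩
  show (extChain hT ξ x hx hx0).toInf.val 0 (Λ.d ξ + n) = _
  rw [Chain.toInf_val0]
  show (if (Λ.d ξ + n) 0 ≤ Λ.d ξ 0 then _ else Λ.comp ξ (x.val 0 (fn ((Λ.d ξ + n) 0 - Λ.d ξ 0)))) = _
  by_cases h : n 0 = 0
  · have hn : n = 0 := by apply ext0; rw [h]; rfl
    subst hn
    have : (Λ.d ξ + 0) 0 = Λ.d ξ 0 := by simp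
    rw [if_pos (le_of_eq this)]
    have h0 : (Λ.d ξ + (0 : Fin 1 → ℕ)) 0 = Λ.d ξ 0 := this
    rw [show ((Λ.d ξ + (0 : Fin 1 → ℕ)) 0) = Λ.d ξ 0 from this, splitAt_last, hx0,
      Λ.comp_id]
  · have hgt : ¬ (Λ.d ξ + n) 0 ≤ Λ.d ξ 0 := by
      simp only [Pi.add_apply]
      omega
    rw [if_neg hgt]
    congr 1
    apply congrArg
    apply ext0
    simp only [fn, Pi.add_apply]
    omega

end Ext

end CWE1
namespace CWE1

open KGraph

variable {Λ : KGraph 1} {T : Set Λ.Path}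

lemma comp_val0 (x : InfPath Λ) (m n : Fin 1 → ℕ) :
    Λ.comp (x.val 0 m) (x.val m n) = x.val 0 (m + n) := by
  have := x.comp_val 0 m n
  rwa [zero_add] at this

lemma valShift {x y : InfPath Λ} {m : Fin 1 → ℕ} (h : ∀ n, y.val 0 n = x.val m n)
    (q n : Fin 1 → ℕ) : y.val q n = x.val (m + q) n := by
  have hc : Λ.comp (y.val 0 q) (y.val q n) = Λ.comp (x.val m q) (x.val (m + q) n) := by
    rw [comp_val0, h (q + n), ← x.comp_val m q n]
  have h1 : Λ.s (y.val 0 q) = Λ.r (y.val q n) := by rw [y.s_val, y.r_val, zero_add]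
  have h2 : Λ.s (x.val m q) = Λ.r (x.val (m + q) n) := by rw [x.s_val, x.r_val]
  have hd : Λ.d (y.val 0 q) = Λ.d (x.val m q) := by rw [y.d_val, x.d_val]
  exact (eq_of_comp_eq h1 h2 hd hc).2

/-- All infinite paths of `ΛT` out of `u` begin with the same path `γ` of length
`p`, and are `p`-periodic. -/
def PerAt (T : Set Λ.Path) (u : Λ.Path) (p : ℕ) : Prop :=
  ∃ γ, ∀ x : InfPath Λ, x.inSub (Λ.tailPaths T) → x.val 0 0 = u →
    x.val 0 (fn p) = γ ∧ ∀ n, x.val (fn p) n = x.val 0 n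

variable {u : Λ.Path} {p : ℕ}

lemma perAt_shift (h : PerAt T u p) {x : InfPath Λ} (hx : x.inSub (Λ.tailPaths T))
    (hx0 : x.val 0 0 = u) (q n : Fin 1 → ℕ) : x.val (q + fn p) n = x.val q n := by
  obtain ⟨γ, hγ⟩ := h
  have hper := (hγ x hx hx0).2
  have h' : ∀ n, x.val 0 n = x.val (fn p) n := fun n => (hper n).symm
  have hv := valShift h' q n
  rw [add_comm q (fn p)]
  exact hv.symm

lemma perAt_shift_mul (h : PerAt T u p) {x : InfPath Λ} (hx : x.inSub (Λ.tailPaths T))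
    (hx0 : x.val 0 0 = u) (k : ℕ) (q n : Fin 1 → ℕ) :
    x.val (q + fn (k * p)) n = x.val q n := by
  induction k with
  | zero =>
    rw [show q + fn (0 * p) = q from by apply ext0; simp
]
  | succ k ih =>
    rw [show q + fn ((k + 1) * p) = (q + fn (k * p)) + fn p from by
      apply ext0; simp [Nat.succ_mul]; omega]
    rw [perAt_shift h hx hx0, ih]

lemma rigid (h : PerAt T u p) (hp : 0 < p) {x y : InfPath Λ}
    (hx : x.inSub (Λ.tailPaths T)) (hy : y.inSub (Λ.tailPaths T))
    (hx0 : x.val 0 0 = u) (hy0 : y.val 0 0 = u) :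
    ∀ q n, x.val q n = y.val q n := by
  obtain ⟨γ, hγ⟩ := h
  obtain ⟨hxγ, hxper⟩ := hγ x hx hx0
  obtain ⟨hyγ, hyper⟩ := hγ y hy hy0
  have key : ∀ m : ℕ, x.val 0 (fn m) = y.val 0 (fn m) := by
    intro m
    induction m using Nat.strong_induction_on with
    | _ m ih =>
      rcases le_or_gt m p with hm | hm
      · have cx : Λ.comp (x.val 0 (fn m)) (x.val (fn m) (fn (p - m))) = γ := by
          rw [comp_val0, fn_add, show m + (p - m) = p from by omega, hxγ]
        have cy : Λ.comp (y.val 0 (fn m)) (y.val (fn m) (fn (p - m))) = γ := by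
          rw [comp_val0, fn_add, show m + (p - m) = p from by omega, hyγ]
        have h1 : Λ.s (x.val 0 (fn m)) = Λ.r (x.val (fn m) (fn (p - m))) := by
          rw [x.s_val, x.r_val, zero_add]
        have h2 : Λ.s (y.val 0 (fn m)) = Λ.r (y.val (fn m) (fn (p - m))) := by
          rw [y.s_val, y.r_val, zero_add]
        have hd : Λ.d (x.val 0 (fn m)) = Λ.d (y.val 0 (fn m)) := by
          rw [x.d_val, y.d_val]
        exact (eq_of_comp_eq h1 h2 hd (cx.trans cy.symm)).1
      · have e : fn m = fn p + fn (m - p) := by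
          rw [fn_add, show p + (m - p) = m from by omega]
        have ex : x.val 0 (fn m) = Λ.comp γ (x.val 0 (fn (m - p))) := by
          rw [e, ← comp_val0, hxper, hxγ]
        have ey : y.val 0 (fn m) = Λ.comp γ (y.val 0 (fn (m - p))) := by
          rw [e, ← comp_val0, hyper, hyγ]
        rw [ex, ey, ih (m - p) (by omega)]
  have key' : ∀ n : Fin 1 → ℕ, x.val 0 n = y.val 0 n := fun n => by
    rw [eq_fn n]; exact key (n 0)
  intro q n
  have h' : ∀ n, y.val 0 n = x.val 0 n := fun n => (key' n).symm
  have hv := valShift h' q n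
  rw [zero_add] at hv
  exact hv.symm

lemma rigidShift (hT : MaximalTail Λ T) (h : PerAt T u p) (hp : 0 < p) {x : InfPath Λ}
    (hx : x.inSub (Λ.tailPaths T)) (hx0 : x.val 0 0 = u) (m : Fin 1 → ℕ)
    {y : InfPath Λ} (hy : y.inSub (Λ.tailPaths T)) (hy0 : y.val 0 0 = x.val m 0) :
    ∀ q n, y.val q n = x.val (m + q) n := by
  have hξs : Λ.s (x.val 0 m) = x.val m 0 := by rw [x.s_val, zero_add]
  have hy0' : y.val 0 0 = Λ.s (x.val 0 m) := by rw [hy0, hξs]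
  set z := extInf hT (x.val 0 m) y hy hy0' with hzdef
  have hz : z.inSub (Λ.tailPaths T) := extInf_inSub hT _ y hy hy0'
  have hz0 : z.val 0 0 = u := by
    rw [hzdef, extInf_zero, x.r_val, hx0]
  have E := rigid h hp hz hx hz0 hx0
  have hext := (extInf_ext hT (x.val 0 m) y hy hy0').2
  have key : ∀ n, y.val 0 n = x.val m n := by
    intro n
    have e1 := hext n
    rw [x.d_val 0 m] at e1
    rw [← hzdef] at e1
    rw [E 0 (m + n)] at e1
    have e2 : x.val 0 (m + n) = Λ.comp (x.val 0 m) (x.val m n) := (comp_val0 x m n).symm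
    have h1 : Λ.s (x.val 0 m) = Λ.r (y.val 0 n) := by rw [y.r_val, hy0']
    have h2 : Λ.s (x.val 0 m) = Λ.r (x.val m n) := by rw [x.r_val]; exact hξs
    exact (eq_of_comp_eq h1 h2 rfl (e1.symm.trans e2)).2
  exact fun q n => valShift key q n

lemma finForcedAt (hT : MaximalTail Λ T) (h : PerAt T u p) (hp : 0 < p) {x : InfPath Λ}
    (hx : x.inSub (Λ.tailPaths T)) (hx0 : x.val 0 0 = u) (m : Fin 1 → ℕ) (ξ : Λ.Path)
    (hr : Λ.r ξ = x.val m 0) (hs : Λ.s ξ ∈ T) : ξ = x.val m (Λ.d ξ) := by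
  have hXz : (XP hT hs).val 0 0 = Λ.s ξ := XP_zero hT hs
  set y := extInf hT ξ (XP hT hs) (XP_inSub hT hs) hXz with hydef
  have hyS : y.inSub (Λ.tailPaths T) := extInf_inSub hT ξ _ (XP_inSub hT hs) hXz
  have hy0 : y.val 0 0 = x.val m 0 := by rw [hydef, extInf_zero, hr]
  have E := rigidShift hT h hp hx hx0 m hyS hy0
  have hyξ : y.val 0 (Λ.d ξ) = ξ := by
    have he := (extInf_ext hT ξ (XP hT hs) (XP_inSub hT hs) hXz).2 0
    rw [add_zero, hXz, Λ.comp_id] at he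
    rw [hydef]
    exact he
  conv_lhs => rw [← hyξ]
  rw [E 0 (Λ.d ξ), add_zero]

lemma perAt_transfer (hT : MaximalTail Λ T) (h : PerAt T u p) (hp : 0 < p) {x : InfPath Λ}
    (hx : x.inSub (Λ.tailPaths T)) (hx0 : x.val 0 0 = u) (m : Fin 1 → ℕ) :
    PerAt T (x.val m 0) p := by
  refine ⟨x.val m (fn p), fun y hy hy0 => ?_⟩
  have E := rigidShift hT h hp hx hx0 m hy hy0
  constructor
  · have := E 0 (fn p)
    rwa [add_zero] at this
  · intro n
    have e1 := E (fn p) n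
    have e2 := perAt_shift h hx hx0 m n
    have e3 := E 0 n
    rw [add_zero] at e3
    rw [e1, e2, ← e3]

lemma forcing (hT : MaximalTail Λ T) {μ ν : Λ.Path}
    (hc : Λ.IsCyclinePair (Λ.tailPaths T) μ ν) (hd : Λ.d μ 0 ≠ Λ.d ν 0) :
    ∃ q, 0 < q ∧ (Λ.d μ 0 = Λ.d ν 0 + q ∨ Λ.d ν 0 = Λ.d μ 0 + q) ∧ PerAt T (Λ.s ν) q := by
  obtain ⟨hμP, hνP, hsμν, hcond⟩ := hc
  have hsν : Λ.s ν ∈ T := hνP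
  rcases Nat.lt_or_ge (Λ.d ν 0) (Λ.d μ 0) with hlt | hge
  · -- d μ 0 = d ν 0 + q
    set q := Λ.d μ 0 - Λ.d ν 0 with hqdef
    have key : ∀ x : InfPath Λ, x.inSub (Λ.tailPaths T) → x.val 0 0 = Λ.s ν →
        μ = Λ.comp ν (x.val 0 (fn q)) ∧ ∀ n, x.val (fn q) n = x.val 0 n := by
      intro x hx hx0
      set z := extInf hT ν x hx hx0 with hzdef
      have hzext := extInf_ext hT ν x hx hx0
      obtain ⟨hsμx, hE⟩ := hcond x hx z hzext
      have hF := hzext.2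
      have hrν : Λ.s ν = Λ.r (x.val 0 (fn q)) := by rw [x.r_val]; exact hx0.symm
      have main : ∀ n : Fin 1 → ℕ, Λ.comp μ (x.val 0 n) =
          Λ.comp (Λ.comp ν (x.val 0 (fn q))) (x.val (fn q) n) := by
        intro n
        have e0 : Λ.d μ + n = Λ.d ν + (fn q + n) := by
          apply ext0; simp; omega
        have e1 := hE n
        rw [e0, hF (fn q + n), ← comp_val0 x (fn q) n,
          ← Λ.comp_assoc ν _ _ hrν (by rw [x.s_val, x.r_val, zero_add])] at e1
        exact e1.symm
      have Hn : ∀ n, μ = Λ.comp ν (x.val 0 (fn q)) ∧ x.val 0 n = x.val (fn q) n := by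
        intro n
        have h1 : Λ.s μ = Λ.r (x.val 0 n) := by rw [x.r_val]; exact hsμx
        have h2 : Λ.s (Λ.comp ν (x.val 0 (fn q))) = Λ.r (x.val (fn q) n) := by
          rw [Λ.s_comp _ _ hrν, x.s_val, x.r_val, zero_add]
        have hdd : Λ.d μ = Λ.d (Λ.comp ν (x.val 0 (fn q))) := by
          rw [Λ.d_comp _ _ hrν, x.d_val]
          apply ext0; simp; omega
        exact eq_of_comp_eq h1 h2 hdd (main n)
      exact ⟨(Hn 0).1, fun n => ((Hn n).2).symm⟩
    refine ⟨q, by omega, Or.inl (by omega), (XP hT hsν).val 0 (fn q), fun x hx hx0 => ?_⟩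
    obtain ⟨hμx, hperx⟩ := key x hx hx0
    obtain ⟨hμX, _⟩ := key (XP hT hsν) (XP_inSub hT hsν) (XP_zero hT hsν)
    refine ⟨?_, hperx⟩
    have h1 : Λ.s ν = Λ.r (x.val 0 (fn q)) := by rw [x.r_val]; exact hx0.symm
    have h2 : Λ.s ν = Λ.r ((XP hT hsν).val 0 (fn q)) := by
      rw [(XP hT hsν).r_val]; exact (XP_zero hT hsν).symm
    exact (eq_of_comp_eq h1 h2 rfl (hμx.symm.trans hμX)).2
  · -- d ν 0 = d μ 0 + q
    have hlt : Λ.d μ 0 < Λ.d ν 0 := by omega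
    set q := Λ.d ν 0 - Λ.d μ 0 with hqdef
    have key : ∀ x : InfPath Λ, x.inSub (Λ.tailPaths T) → x.val 0 0 = Λ.s ν →
        ν = Λ.comp μ (x.val 0 (fn q)) ∧ ∀ n, x.val (fn q) n = x.val 0 n := by
      intro x hx hx0
      set z := extInf hT ν x hx hx0 with hzdef
      have hzext := extInf_ext hT ν x hx hx0
      obtain ⟨hsμx, hE⟩ := hcond x hx z hzext
      have hF := hzext.2
      have hrμ : Λ.s μ = Λ.r (x.val 0 (fn q)) := by rw [x.r_val]; exact hsμx
      have main : ∀ n : Fin 1 → ℕ, Λ.comp ν (x.val 0 n) =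
          Λ.comp (Λ.comp μ (x.val 0 (fn q))) (x.val (fn q) n) := by
        intro n
        have e0 : Λ.d ν + n = Λ.d μ + (fn q + n) := by
          apply ext0; simp; omega
        have e1 := hF n
        rw [e0, hE (fn q + n), ← comp_val0 x (fn q) n,
          ← Λ.comp_assoc μ _ _ hrμ (by rw [x.s_val, x.r_val, zero_add])] at e1
        exact e1.symm
      have Hn : ∀ n, ν = Λ.comp μ (x.val 0 (fn q)) ∧ x.val 0 n = x.val (fn q) n := by
        intro n
        have h1 : Λ.s ν = Λ.r (x.val 0 n) := by rw [x.r_val]; exact hx0.symm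
        have h2 : Λ.s (Λ.comp μ (x.val 0 (fn q))) = Λ.r (x.val (fn q) n) := by
          rw [Λ.s_comp _ _ hrμ, x.s_val, x.r_val, zero_add]
        have hdd : Λ.d ν = Λ.d (Λ.comp μ (x.val 0 (fn q))) := by
          rw [Λ.d_comp _ _ hrμ, x.d_val]
          apply ext0; simp; omega
        exact eq_of_comp_eq h1 h2 hdd (main n)
      exact ⟨(Hn 0).1, fun n => ((Hn n).2).symm⟩
    refine ⟨q, by omega, Or.inr (by omega), (XP hT hsν).val 0 (fn q), fun x hx hx0 => ?_⟩
    obtain ⟨hμx, hperx⟩ := key x hx hx0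
    obtain ⟨hμX, _⟩ := key (XP hT hsν) (XP_inSub hT hsν) (XP_zero hT hsν)
    refine ⟨?_, hperx⟩
    obtain ⟨hsμx, hE⟩ := hcond (XP hT hsν) (XP_inSub hT hsν) _
      (extInf_ext hT ν (XP hT hsν) (XP_inSub hT hsν) (XP_zero hT hsν))
    have h1 : Λ.s μ = Λ.r (x.val 0 (fn q)) := by
      rw [x.r_val, hx0]
      exact hsμx.trans (XP_zero hT hsν)
    have h2 : Λ.s μ = Λ.r ((XP hT hsν).val 0 (fn q)) := by
      rw [(XP hT hsν).r_val]
      exact hsμx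
    exact (eq_of_comp_eq h1 h2 rfl (hμx.symm.trans hμX)).2
  
lemma shift_perpair (hT : MaximalTail Λ T) {t : Λ.Path} (ht : t ∈ T) {p : ℕ}
    (hPt : PerAt T t p) (hp : 0 < p) {D : Fin 1 → ℤ}
    (hD : D ∈ Λ.PerPair (Λ.tailPaths T)) {a b : ℕ} (hab : (a : ℤ) - b = D 0)
    {x : InfPath Λ} (hx : x.inSub (Λ.tailPaths T)) (hx0 : x.val 0 0 = t) :
    ∀ q n, x.val (q + fn a) n = x.val (q + fn b) n := by
  obtain ⟨α, β, hcαβ, hDdef⟩ := hD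
  have hD0 : D 0 = (Λ.d α 0 : ℤ) - Λ.d β 0 := by rw [hDdef]
  by_cases hAB : Λ.d α 0 = Λ.d β 0
  · have hab' : a = b := by omega
    rw [hab']
    exact fun q n => rfl
  · obtain ⟨c, hcpos, hcase, hPt'⟩ := forcing hT hcαβ hAB
    have ht' : Λ.s β ∈ T := hcαβ.2.1
    have claim : ∀ q n, x.val (q + fn c) n = x.val q n := by
      obtain ⟨w, hw, ⟨ρ, hρr, hρs⟩, ⟨ρ', hρ'r, hρ's⟩⟩ := hT.directed t ht (Λ.s β) ht'
      have hρeq : ρ = x.val 0 (Λ.d ρ) :=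
        finForcedAt hT hPt hp hx hx0 0 ρ (hρr.trans hx0.symm) (by rw [hρs]; exact hw)
      set m : Fin 1 → ℕ := Λ.d ρ with hm
      have hw1 : w = x.val m 0 := by
        calc w = Λ.s ρ := hρs.symm
          _ = Λ.s (x.val 0 m) := by rw [← hρeq]
          _ = x.val m 0 := by rw [x.s_val, zero_add]
      have hρ'eq : ρ' = (XP hT ht').val 0 (Λ.d ρ') :=
        finForcedAt hT hPt' hcpos (XP_inSub hT ht') (XP_zero hT ht') 0 ρ'
          (hρ'r.trans (XP_zero hT ht').symm) (by rw [hρ's]; exact hw)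
      set m' : Fin 1 → ℕ := Λ.d ρ' with hm'
      have hw2 : w = (XP hT ht').val m' 0 := by
        calc w = Λ.s ρ' := hρ's.symm
          _ = Λ.s ((XP hT ht').val 0 m') := by rw [← hρ'eq]
          _ = (XP hT ht').val m' 0 := by rw [(XP hT ht').s_val, zero_add]
      have hy0 : (XP hT hw).val 0 0 = w := XP_zero hT hw
      have E1 := rigidShift hT hPt hp hx hx0 m (XP_inSub hT hw) (hy0.trans hw1)
      have E2 := rigidShift hT hPt' hcpos (XP_inSub hT ht') (XP_zero hT ht') m'
        (XP_inSub hT hw) (hy0.trans hw2)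
      have Pw : PerAt T w c := by
        have := perAt_transfer hT hPt' hcpos (XP_inSub hT ht') (XP_zero hT ht') m'
        rwa [← hw2] at this
      have Sy : ∀ q n, (XP hT hw).val (q + fn c) n = (XP hT hw).val q n :=
        fun q n => perAt_shift Pw (XP_inSub hT hw) hy0 q n
      intro q n
      set N := m 0 with hN
      have hNp : m 0 ≤ N * p := Nat.le_mul_of_pos_right _ hp
      set q2 : Fin 1 → ℕ := fn (q 0 + N * p - m 0) with hq2
      have idxA : q + fn (N * p) = m + q2 := by
        apply ext0; simp [hq2]; omega
      calc x.val (q + fn c) n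
          = x.val ((q + fn c) + fn (N * p)) n :=
            (perAt_shift_mul hPt hx hx0 N (q + fn c) n).symm
        _ = x.val ((m + q2) + fn c) n := by
            rw [show (q + fn c) + fn (N * p) = (m + q2) + fn c from by
              rw [← idxA]; apply ext0; simp; omega]
        _ = x.val (m + (q2 + fn c)) n := by rw [add_assoc]
        _ = (XP hT hw).val (q2 + fn c) n := (E1 (q2 + fn c) n).symm
        _ = (XP hT hw).val q2 n := Sy q2 n
        _ = x.val (m + q2) n := E1 q2 n
        _ = x.val (q + fn (N * p)) n := by rw [← idxA]
        _ = x.val q n := perAt_shift_mul hPt hx hx0 N q n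
    intro q n
    have hrel : a = b + c ∨ b = a + c := by
      rcases hcase with h | h
      · left; omega
      · right; omega
    rcases hrel with h | h
    · rw [show q + fn a = (q + fn b) + fn c from by apply ext0; simp; omega]
      exact claim (q + fn b) n
    · rw [show q + fn b = (q + fn a) + fn c from by apply ext0; simp; omega]
      exact (claim (q + fn a) n).symm

end CWE1
open CWE1
/-- For a row-finite source-free `1`-graph `Λ` and a maximal tail `T` with
`Per_{ΛT} ≠ 0`: `ΛT` contains a cycle without entrances whose vertex set is
exactly `H_T`; in particular `H_T ΛT` is strongly connected. -/
theorem cycle_without_entrances_of_periodic_tail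
    (Λ : KGraph 1) (hRF : Λ.RowFinite) (hSF : Λ.SourceFree)
    (T : Set Λ.Path) (hT : MaximalTail Λ T)
    (hPer : ∃ m ∈ Λ.PerPair (Λ.tailPaths T), m ≠ 0) :
    ∃ μ : Λ.Path,
      -- μ is a cycle in ΛT
      Λ.s μ ∈ T ∧ Λ.r μ = Λ.s μ ∧ Λ.d μ ≠ 0 ∧
      -- without entrances: every vertex on the cycle emits exactly one edge of ΛT
      (∀ v, (∃ α β, Λ.s α = Λ.r β ∧ Λ.comp α β = μ ∧ Λ.s α = v) →
        ∃! e, Λ.r e = v ∧ Λ.d e = (fun _ => 1) ∧ Λ.s e ∈ T) ∧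
      -- the vertex set of the cycle is H_T
      {v | ∃ α β, Λ.s α = Λ.r β ∧ Λ.comp α β = μ ∧ Λ.s α = v} = Λ.HSet T ∧
      -- H_T ΛT is strongly connected
      (∀ u ∈ Λ.HSet T, ∀ w ∈ Λ.HSet T, ∃ ξ, Λ.r ξ = u ∧ Λ.s ξ = w) := by
  classical
  obtain ⟨m₀, hm₀mem, hm₀ne⟩ := hPer
  obtain ⟨μ₀, ν₀, hc₀, hm₀⟩ := hm₀mem
  have hd₀ : Λ.d μ₀ 0 ≠ Λ.d ν₀ 0 := by
    intro h
    apply hm₀ne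
    rw [hm₀]
    funext i
    rw [Fin.eq_zero i]
    simp [h]
  have ht : Λ.s ν₀ ∈ T := hc₀.2.1
  obtain ⟨p, hp, -, hPt⟩ := forcing hT hc₀ hd₀
  set t := Λ.s ν₀ with htdef
  set xt := XP hT ht with hxtdef
  have hxtS : xt.inSub (Λ.tailPaths T) := XP_inSub hT ht
  have hxt0 : xt.val 0 0 = t := XP_zero hT ht
  have per_xt : ∀ q n, xt.val (q + fn p) n = xt.val q n :=
    fun q n => perAt_shift hPt hxtS hxt0 q n
  set lam := xt.val 0 (fn p) with hlam
  have hlam_d : Λ.d lam = fn p := xt.d_val 0 (fn p)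
  have hlam_r : Λ.r lam = t := by rw [hlam, xt.r_val, hxt0]
  have hlam_s : Λ.s lam = t := by
    rw [hlam, xt.s_val, zero_add]
    have h := per_xt 0 0
    rw [zero_add] at h
    rw [h, hxt0]
  -- characterization of the vertex set of the cycle
  have hchar : ∀ v, (∃ α β, Λ.s α = Λ.r β ∧ Λ.comp α β = lam ∧ Λ.s α = v) →
      ∃ j, j ≤ p ∧ v = xt.val (fn j) 0 := by
    rintro v ⟨α, β, h1, h2, h3⟩
    have hdsum : Λ.d α + Λ.d β = fn p := by
      rw [← Λ.d_comp α β h1, h2, hlam_d]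
    have hcan : Λ.comp (xt.val 0 (Λ.d α)) (xt.val (Λ.d α) (Λ.d β)) = lam := by
      rw [comp_val0, hdsum]
    have h2' : Λ.s (xt.val 0 (Λ.d α)) = Λ.r (xt.val (Λ.d α) (Λ.d β)) := by
      rw [xt.s_val, xt.r_val, zero_add]
    have hda : Λ.d α = Λ.d (xt.val 0 (Λ.d α)) := (xt.d_val 0 (Λ.d α)).symm
    have heq := eq_of_comp_eq h1 h2' hda (h2.trans hcan.symm)
    refine ⟨Λ.d α 0, ?_, ?_⟩
    · have hh := congrFun hdsum 0
      simp at hh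
      omega
    · have hsa : Λ.s α = xt.val (Λ.d α) 0 := by
        conv_lhs => rw [heq.1]
        rw [xt.s_val, zero_add]
      rw [← h3, hsa, ← eq_fn (Λ.d α)]
  have hfin : ∀ (m : Fin 1 → ℕ) (ξ : Λ.Path), Λ.r ξ = xt.val m 0 → Λ.s ξ ∈ T →
      ξ = xt.val m (Λ.d ξ) := fun m ξ hr hs => finForcedAt hT hPt hp hxtS hxt0 m ξ hr hs
  have hrigidS : ∀ (m : Fin 1 → ℕ) (y : InfPath Λ), y.inSub (Λ.tailPaths T) →
      y.val 0 0 = xt.val m 0 → ∀ q n, y.val q n = xt.val (m + q) n :=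
    fun m y hy hy0 => rigidShift hT hPt hp hxtS hxt0 m hy hy0
  -- no entrances
  have noEnt : ∀ v, (∃ α β, Λ.s α = Λ.r β ∧ Λ.comp α β = lam ∧ Λ.s α = v) →
      ∃! e, Λ.r e = v ∧ Λ.d e = (fun _ => 1) ∧ Λ.s e ∈ T := by
    intro v hv
    obtain ⟨j, hj, hveq⟩ := hchar v hv
    refine ⟨xt.val (fn j) (fn 1), ⟨?_, ?_, ?_⟩, ?_⟩
    · rw [xt.r_val, hveq]
    · exact xt.d_val _ _
    · exact inSub_s_mem hxtS _ _
    · rintro e ⟨her, hed, hes⟩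
      have he := hfin (fn j) e (by rw [her, hveq]) hes
      rw [he, hed]
      rfl
  -- vertex set equals H_T
  have hVH : {v | ∃ α β, Λ.s α = Λ.r β ∧ Λ.comp α β = lam ∧ Λ.s α = v} = Λ.HSet T := by
    ext v
    simp only [Set.mem_setOf_eq, KGraph.HSet]
    constructor
    · intro hv
      obtain ⟨j, hj, hveq⟩ := hchar v hv
      subst hveq
      set m : Fin 1 → ℕ := fn j with hmdef
      refine ⟨inSub_vertex_mem hxtS _, ?_⟩
      intro p' q' hdiff μ' hμr hμd hμs
      have hshift0 : ∀ q n, xt.val (q + fn (p' 0)) n = xt.val (q + fn (q' 0)) n :=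
        fun q n => shift_perpair hT ht hPt hp hdiff rfl hxtS hxt0 q n
      have hshift' : ∀ q n, xt.val (q + p') n = xt.val (q + q') n := by
        intro q n
        have hh := hshift0 q n
        rwa [← eq_fn p', ← eq_fn q'] at hh
      have hμ'eq : μ' = xt.val m p' := by
        have hh := hfin m μ' (by rw [hμr]) hμs
        rwa [hμd] at hh
      refine ⟨xt.val m q', ⟨?_, ?_, ?_⟩, ?_⟩
      · rw [xt.r_val]
      · exact xt.d_val _ _
      · -- cycline pair (μ', xt.val m q')
        refine ⟨hμs, hxtS m q', ?_, ?_⟩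
        · rw [hμ'eq, xt.s_val, xt.s_val]
          exact hshift' m 0
        · intro x hx z hz
          obtain ⟨hz1, hz2⟩ := hz
          rw [xt.d_val] at hz2
          have hx0 : x.val 0 0 = xt.val (m + q') 0 := by
            rw [← hz1, xt.s_val]
          have Ex : ∀ n, x.val 0 n = xt.val (m + q') n := by
            intro n
            have hh := hrigidS (m + q') x hx hx0 0 n
            rwa [add_zero] at hh
          have Zge : ∀ n, z.val 0 (q' + n) = xt.val m (q' + n) := by
            intro n
            rw [hz2 n, Ex n, xt.comp_val m q' n]
          have Z : ∀ w : Fin 1 → ℕ, z.val 0 w = xt.val m w := by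
            intro w
            rcases le_or_gt (q' 0) (w 0) with hw | hw
            · have hww : w = q' + fn (w 0 - q' 0) := by apply ext0; simp; omega
              rw [hww, Zge]
            · have hzq : z.val 0 q' = xt.val m q' := by
                have hh := Zge 0
                rwa [add_zero] at hh
              have e1 := z.comp_val 0 w (fn (q' 0 - w 0))
              rw [zero_add] at e1
              have hwq : w + fn (q' 0 - w 0) = q' := by apply ext0; simp; omega
              rw [hwq] at e1
              have e2 := xt.comp_val m w (fn (q' 0 - w 0))
              rw [hwq] at e2
              have hcc : Λ.comp (z.val 0 w) (z.val w (fn (q' 0 - w 0))) =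
                  Λ.comp (xt.val m w) (xt.val (m + w) (fn (q' 0 - w 0))) := by
                rw [e1, e2, hzq]
              have h1 : Λ.s (z.val 0 w) = Λ.r (z.val w (fn (q' 0 - w 0))) := by
                rw [z.s_val, z.r_val, zero_add]
              have h2 : Λ.s (xt.val m w) = Λ.r (xt.val (m + w) (fn (q' 0 - w 0))) := by
                rw [xt.s_val, xt.r_val]
              have hdz : Λ.d (z.val 0 w) = Λ.d (xt.val m w) := by rw [z.d_val, xt.d_val]
              exact (eq_of_comp_eq h1 h2 hdz hcc).1
          constructor
          · rw [hμ'eq, xt.s_val, ← hz1, xt.s_val]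
            exact hshift' m 0
          · intro n
            rw [hμ'eq, xt.d_val, Z (p' + n), Ex n, ← xt.comp_val m p' n]
            congr 1
            exact hshift' m n
      · rintro ν ⟨hνr, hνd, hνc⟩
        have hνs : Λ.s ν ∈ T := hνc.2.1
        have hh := hfin m ν (by rw [hνr]) hνs
        rwa [hνd] at hh
    · rintro ⟨hvT, hH⟩
      have htd : Λ.d t = 0 := hT.vertex t ht
      have hts : Λ.s t = t := s_eq_self htd
      have hcySelf : Λ.IsCyclinePair (Λ.tailPaths T) lam t := by
        refine ⟨?_, ?_, ?_, ?_⟩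
        · show Λ.s lam ∈ T
          rw [hlam_s]; exact ht
        · show Λ.s t ∈ T
          rw [hts]; exact ht
        · rw [hlam_s, hts]
        · intro x hx z hz
          obtain ⟨hz1, hz2⟩ := hz
          have hx0 : x.val 0 0 = t := by rw [← hz1, hts]
          have hzx : ∀ n, z.val 0 n = x.val 0 n := by
            intro n
            have hh := hz2 n
            rw [htd, zero_add] at hh
            rw [hh]
            have hru : Λ.r (x.val 0 n) = t := by rw [x.r_val, hx0]
            rw [← hru, Λ.id_comp]
          have Ex : ∀ q n, x.val q n = xt.val q n := by
            intro q n
            have hh := hrigidS 0 x hx (by rw [hx0, hxt0]) q n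
            rwa [zero_add] at hh
          constructor
          · rw [hlam_s, hx0]
          · intro n
            rw [hlam_d, hzx, Ex 0 (fn p + n), ← comp_val0 xt (fn p) n,
              show xt.val (fn p) n = xt.val 0 n from by
                have hh := per_xt 0 n; rwa [zero_add] at hh,
              Ex 0 n, hlam]
      have hmemPer : (fun i => ((fn p i : ℕ) : ℤ) - (((0 : Fin 1 → ℕ) i : ℕ) : ℤ)) ∈
          Λ.PerPair (Λ.tailPaths T) := by
        refine ⟨lam, t, hcySelf, ?_⟩
        funext i
        rw [hlam_d, htd]
      set xv := XP hT hvT with hxv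
      have hxvS : xv.inSub (Λ.tailPaths T) := XP_inSub hT hvT
      have hxv0 : xv.val 0 0 = v := XP_zero hT hvT
      set μ' := xv.val 0 (fn p) with hμ'
      obtain ⟨ν, ⟨hνr, hνd, hνc⟩, -⟩ := hH (fn p) 0 hmemPer μ'
        (by rw [hμ', xv.r_val, hxv0]) (xv.d_val 0 _) (inSub_s_mem hxvS 0 _)
      have hνv : ν = v := by
        have hh := Λ.eq_r_of_d_eq_zero ν hνd
        rw [hh, hνr]
      rw [hνv] at hνc
      have hdv : Λ.d v = 0 := hT.vertex v hvT
      have hsv : Λ.s v = v := s_eq_self hdv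
      have selfext : ∀ x : InfPath Λ, x.val 0 0 = v → Λ.IsExtension v x x := by
        intro x hx0
        refine ⟨hsv.trans hx0.symm, fun n => ?_⟩
        rw [hdv, zero_add]
        have hru : Λ.r (x.val 0 n) = v := by rw [x.r_val, hx0]
        rw [← hru, Λ.id_comp]
      have hsμ'v : Λ.s μ' = v := by
        have hh := (hνc.2.2.2 xv hxvS xv (selfext xv hxv0)).1
        rw [hh, hxv0]
      have hdμ' : Λ.d μ' = fn p := xv.d_val 0 _
      have hPv : PerAt T v p := by
        refine ⟨μ', fun x hx hx0 => ?_⟩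
        obtain ⟨hs', hE⟩ := hνc.2.2.2 x hx x (selfext x hx0)
        have A : x.val 0 (fn p) = μ' := by
          have hh := hE 0
          rw [add_zero, hdμ'] at hh
          rw [hh, hx0, ← hsμ'v, Λ.comp_id]
        refine ⟨A, fun n => ?_⟩
        have e1 := comp_val0 x (fn p) n
        have e2 := hE n
        rw [hdμ', ← A] at e2
        have hc2 : Λ.comp (x.val 0 (fn p)) (x.val (fn p) n) =
            Λ.comp (x.val 0 (fn p)) (x.val 0 n) := e1.trans e2
        have h1 : Λ.s (x.val 0 (fn p)) = Λ.r (x.val (fn p) n) := by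
          rw [x.s_val, x.r_val, zero_add]
        have h2 : Λ.s (x.val 0 (fn p)) = Λ.r (x.val 0 n) := by
          rw [A, hsμ'v, x.r_val, hx0]
        exact (eq_of_comp_eq h1 h2 rfl hc2).2
      obtain ⟨w, hw, ⟨ρ, hρr, hρs⟩, ⟨ρ', hρ'r, hρ's⟩⟩ := hT.directed t ht v hvT
      have hρeq : ρ = xt.val 0 (Λ.d ρ) :=
        finForcedAt hT hPt hp hxtS hxt0 0 ρ (hρr.trans hxt0.symm) (by rw [hρs]; exact hw)
      set m : Fin 1 → ℕ := Λ.d ρ with hmdef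
      have hw1 : w = xt.val m 0 := by
        calc w = Λ.s ρ := hρs.symm
          _ = Λ.s (xt.val 0 m) := by rw [← hρeq]
          _ = xt.val m 0 := by rw [xt.s_val, zero_add]
      have hρ'eq : ρ' = xv.val 0 (Λ.d ρ') :=
        finForcedAt hT hPv hp hxvS hxv0 0 ρ' (hρ'r.trans hxv0.symm) (by rw [hρ's]; exact hw)
      set m' : Fin 1 → ℕ := Λ.d ρ' with hm'def
      have hw2 : w = xv.val m' 0 := by
        calc w = Λ.s ρ' := hρ's.symm
          _ = Λ.s (xv.val 0 m') := by rw [← hρ'eq]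
          _ = xv.val m' 0 := by rw [xv.s_val, zero_add]
      have hy0 : (XP hT hw).val 0 0 = w := XP_zero hT hw
      have E1 := rigidShift hT hPt hp hxtS hxt0 m (XP_inSub hT hw) (hy0.trans hw1)
      have E2 := rigidShift hT hPv hp hxvS hxv0 m' (XP_inSub hT hw) (hy0.trans hw2)
      set N := m' 0 with hNdef
      have hNp : m' 0 ≤ N * p := Nat.le_mul_of_pos_right _ hp
      have hv1 : v = xv.val (fn (N * p)) 0 := by
        have hh := perAt_shift_mul hPv hxvS hxv0 N 0 0
        rw [zero_add] at hh
        rw [hh]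
        exact hxv0.symm
      have hidx : fn (N * p) = m' + fn (N * p - m' 0) := by
        apply ext0; simp; omega
      have hv2 : v = xt.val (m + fn (N * p - m' 0)) 0 := by
        rw [hv1, hidx, ← E2 (fn (N * p - m' 0)) 0, E1 (fn (N * p - m' 0)) 0]
      set j' := m 0 + (N * p - m' 0) with hj'
      have hidx2 : m + fn (N * p - m' 0) = fn (j' % p) + fn ((j' / p) * p) := by
        have hmd := Nat.mod_add_div' j' p
        apply ext0; simp; omega
      have hv3 : v = xt.val (fn (j' % p)) 0 := by
        rw [hv2, hidx2, perAt_shift_mul hPt hxtS hxt0 (j' / p) (fn (j' % p)) 0]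
      have hjp : j' % p ≤ p := le_of_lt (Nat.mod_lt _ hp)
      refine ⟨xt.val 0 (fn (j' % p)), xt.val (fn (j' % p)) (fn (p - j' % p)), ?_, ?_, ?_⟩
      · rw [xt.s_val, xt.r_val, zero_add]
      · have hh := xt.comp_val 0 (fn (j' % p)) (fn (p - j' % p))
        rw [zero_add] at hh
        rw [hh, fn_add, show j' % p + (p - j' % p) = p from by omega]
      · rw [xt.s_val, zero_add]
        exact hv3.symm
  -- strong connectivity
  have conn : ∀ u ∈ Λ.HSet T, ∀ w ∈ Λ.HSet T, ∃ ξ, Λ.r ξ = u ∧ Λ.s ξ = w := by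
    intro u hu w hw
    rw [← hVH] at hu hw
    obtain ⟨i, hi, hueq⟩ := hchar u hu
    obtain ⟨j, hj, hweq⟩ := hchar w hw
    refine ⟨xt.val (fn i) (fn (p + j - i)), ?_, ?_⟩
    · rw [xt.r_val, hueq]
    · rw [xt.s_val, fn_add, show i + (p + j - i) = j + p from by omega,
        show fn (j + p) = fn j + fn p from (fn_add j p).symm,
        perAt_shift hPt hxtS hxt0 (fn j) 0, hweq]
  have hdne : Λ.d lam ≠ 0 := by
    rw [hlam_d]
    intro hh
    have hh0 := congrFun hh 0
    simp at hh0
    omega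
  exact ⟨lam, by rw [hlam_s]; exact ht, hlam_r.trans hlam_s.symm, hdne, noEnt, hVH, conn⟩
end
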